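/- arXiv:2403.14529 — 10 statements merged into one kernel-verified Lean document; each statement's English description precedes it below -/
import Mathlib

section
/- Let K be a compact subset of the totally real plane V = {(ζ, conj ζ) : ζ ∈ ℂ} ⊂ ℂ². For every point (z₀, w₀) ∈ ℂ² \ K there exists a polynomial P(z,w) of degree at most 2 such that P(z₀,w₀) = 1 and sup_{(z,w) ∈ K} |P(z,w)| < 1. -/
open MvPolynomial Complex


/-- For a compact subset `K` of the totally real plane `{(ζ, conj ζ)} ⊆ ℂ²`, every point
outside `K` can be separated by a polynomial of degree at most `2` taking value `1`
at the point and of modulus `< 1` on `K`. -/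
theorem stmt_2 (K : Set (ℂ × ℂ)) (hK : IsCompact K)
    (hKV : K ⊆ {p : ℂ × ℂ | p.2 = (starRingEnd ℂ) p.1})
    (z₀ w₀ : ℂ) (hz : (z₀, w₀) ∉ K) :
    ∃ P : MvPolynomial (Fin 2) ℂ, P.totalDegree ≤ 2 ∧
      MvPolynomial.eval ![z₀, w₀] P = 1 ∧
      ∀ p ∈ K, ‖MvPolynomial.eval ![p.1, p.2] P‖ < 1 := by
  rcases K.eq_empty_or_nonempty with rfl | hne
  · exact ⟨1, by simp, by simp, by simp⟩
  set g : ℂ × ℂ → ℝ := fun p => Complex.normSq (p.1 - z₀) + Complex.normSq (p.1 - (starRingEnd ℂ) w₀) with hg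
  have hgc : ContinuousOn g K := by
    apply Continuous.continuousOn
    continuity
  obtain ⟨pm, hpmK, hpm⟩ := hK.exists_isMinOn hne hgc
  obtain ⟨pM, hpMK, hpM⟩ := hK.exists_isMaxOn hne hgc
  set δ := g pm with hδ
  set M := g pM with hM
  have hδpos : 0 < δ := by
    rcases lt_or_eq_of_le (add_nonneg (Complex.normSq_nonneg _) (Complex.normSq_nonneg _) :
      (0:ℝ) ≤ g pm) with h | h
    · exact h
    exfalso
    have h1 : Complex.normSq (pm.1 - z₀) = 0 ∧ Complex.normSq (pm.1 - (starRingEnd ℂ) w₀) = 0 := by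
      constructor <;> nlinarith [Complex.normSq_nonneg (pm.1 - z₀),
        Complex.normSq_nonneg (pm.1 - (starRingEnd ℂ) w₀)]
    have e1 : pm.1 = z₀ := by
      have := Complex.normSq_eq_zero.mp h1.1; linear_combination this
    have e2 : pm.1 = (starRingEnd ℂ) w₀ := by
      have := Complex.normSq_eq_zero.mp h1.2; linear_combination this
    have e3 : pm.2 = (starRingEnd ℂ) pm.1 := hKV hpmK
    have : pm = (z₀, w₀) := by
      have h2 : pm.2 = w₀ := by rw [e3, e2, Complex.conj_conj]
      exact Prod.ext e1 h2
    exact hz (this ▸ hpmK)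
  have hδM : δ ≤ M := hpM hpmK
  have hMpos : 0 < M := lt_of_lt_of_le hδpos hδM
  set Q : MvPolynomial (Fin 2) ℂ :=
    (X 0 - C z₀) * (X 1 - C ((starRingEnd ℂ) z₀)) + (X 0 - C ((starRingEnd ℂ) w₀)) * (X 1 - C w₀) with hQ
  refine ⟨1 - C ((M:ℂ))⁻¹ * Q, ?_, ?_, ?_⟩
  · -- total degree
    have hX0 : ∀ a : ℂ, (X 0 - C a : MvPolynomial (Fin 2) ℂ).totalDegree ≤ 1 :=
      fun a => (totalDegree_sub_C_le _ _).trans (by simp [totalDegree_X])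
    have hX1 : ∀ a : ℂ, (X 1 - C a : MvPolynomial (Fin 2) ℂ).totalDegree ≤ 1 :=
      fun a => (totalDegree_sub_C_le _ _).trans (by simp [totalDegree_X])
    have hQdeg : Q.totalDegree ≤ 2 := by
      refine (totalDegree_add _ _).trans (max_le ?_ ?_) <;>
        refine (totalDegree_mul _ _).trans ?_
      · exact add_le_add (hX0 _) (hX1 _)
      · exact add_le_add (hX0 _) (hX1 _)
    calc (1 - C ((M:ℂ))⁻¹ * Q : MvPolynomial (Fin 2) ℂ).totalDegree
        = (C ((M:ℂ))⁻¹ * Q - C 1 : MvPolynomial (Fin 2) ℂ).totalDegree := by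
          rw [← totalDegree_neg]; congr 1; rw [← C_1]; ring
      _ ≤ (C ((M:ℂ))⁻¹ * Q : MvPolynomial (Fin 2) ℂ).totalDegree := totalDegree_sub_C_le _ _
      _ ≤ (C ((M:ℂ))⁻¹ : MvPolynomial (Fin 2) ℂ).totalDegree + Q.totalDegree := totalDegree_mul _ _
      _ ≤ 2 := by simpa [totalDegree_C] using hQdeg
  · have : eval ![z₀, w₀] Q = 0 := by simp [hQ]
    simp [this]
  · intro p hpK
    have hp2 : p.2 = (starRingEnd ℂ) p.1 := hKV hpK
    have hevalQ : eval ![p.1, p.2] Q = (g p : ℂ) := by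
      simp only [hQ, map_add, map_mul, map_sub, eval_X, eval_C]
      have ha : (![p.1, p.2] 0 : ℂ) = p.1 := rfl
      have hb : (![p.1, p.2] 1 : ℂ) = p.2 := rfl
      rw [ha, hb, hp2, hg]
      have e1 : (p.1 - z₀) * ((starRingEnd ℂ) p.1 - (starRingEnd ℂ) z₀)
          = (Complex.normSq (p.1 - z₀) : ℂ) := by
        rw [← map_sub, Complex.mul_conj]
      have e2 : (p.1 - (starRingEnd ℂ) w₀) * ((starRingEnd ℂ) p.1 - w₀)
          = (Complex.normSq (p.1 - (starRingEnd ℂ) w₀) : ℂ) := by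
        rw [← Complex.mul_conj, map_sub, Complex.conj_conj]
      push_cast
      rw [e1, e2]
    rw [map_sub, map_mul, hevalQ, eval_C, map_one]
    have hgδ : δ ≤ g p := hpm hpK
    have hgM : g p ≤ M := hpM hpK
    have hcast : (1 : ℂ) - (M:ℂ)⁻¹ * (g p : ℂ) = ((1 - M⁻¹ * g p : ℝ) : ℂ) := by push_cast; ring
    rw [hcast]
    have hle1 : M⁻¹ * g p ≤ 1 := by rw [inv_mul_le_iff₀ hMpos]; nlinarith
    have hnn : 0 ≤ 1 - M⁻¹ * g p := by linarith
    have : ‖((1 - M⁻¹ * g p : ℝ) : ℂ)‖ = 1 - M⁻¹ * g p := by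
      rw [Complex.norm_real, Real.norm_of_nonneg hnn]
    rw [this]
    have : M⁻¹ * δ ≤ M⁻¹ * g p := mul_le_mul_of_nonneg_left hgδ (by positivity)
    nlinarith [mul_pos (inv_pos.mpr hMpos) hδpos]
end

section
/- Every compact subset of ℝ² ⊆ ℂ² is 2-polynomially convex: for every point p of ℂ² not in K there is a polynomial P of degree at most 2 with |P(p)| > sup_K |P|. -/
open MvPolynomial

noncomputable def lin2 (α β γ : ℂ) : MvPolynomial (Fin 2) ℂ :=
  C α * X 0 + C β * X 1 + C γ

lemma lin2_deg (α β γ : ℂ) : (lin2 α β γ).totalDegree ≤ 1 := by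
  unfold lin2
  refine le_trans (totalDegree_add _ _) (max_le (le_trans (totalDegree_add _ _) (max_le ?_ ?_)) ?_)
  · exact le_trans (totalDegree_mul _ _) (by simp [totalDegree_C, totalDegree_X])
  · exact le_trans (totalDegree_mul _ _) (by simp [totalDegree_C, totalDegree_X])
  · simp [totalDegree_C]

lemma lin2_eval (α β γ z w : ℂ) : eval ![z, w] (lin2 α β γ) = α * z + β * w + γ := by
  simp [lin2]

noncomputable def sep2 (c α β γ α' β' γ' : ℂ) : MvPolynomial (Fin 2) ℂ :=
  C c - (lin2 α β γ) ^ 2 - (lin2 α' β' γ') ^ 2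

lemma sep2_deg (c α β γ α' β' γ' : ℂ) : (sep2 c α β γ α' β' γ').totalDegree ≤ 2 := by
  unfold sep2
  refine le_trans (totalDegree_sub _ _) (max_le (le_trans (totalDegree_sub _ _)
    (max_le ?_ ?_)) ?_)
  · simp [totalDegree_C]
  · exact le_trans (totalDegree_pow _ _) (by
      have := lin2_deg α β γ; omega)
  · exact le_trans (totalDegree_pow _ _) (by
      have := lin2_deg α' β' γ'; omega)

lemma sep2_eval (c α β γ α' β' γ' z w : ℂ) :
    eval ![z, w] (sep2 c α β γ α' β' γ') =
      c - (α * z + β * w + γ) ^ 2 - (α' * z + β' * w + γ') ^ 2 := by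
  simp [sep2, lin2_eval]

lemma real_pt (z : ℂ) (h : z.im = 0) : ((z.re : ℂ)) = z :=
  Complex.ext (by simp) (by simp [h])

/-- distance-squared type function -/
noncomputable def fR (a b : ℝ) (q : ℂ × ℂ) : ℝ := (q.1.re - a) ^ 2 + (q.2.re - b) ^ 2

/-- affine function -/
noncomputable def gR (α β γ : ℝ) (q : ℂ × ℂ) : ℝ := α * q.1.re + β * q.2.re + γ

/-- Every compact subset of `ℝ² ⊆ ℂ²` is `2`-polynomially convex: every point of `ℂ²`
outside `K` can be separated from `K` by a polynomial of degree at most `2`. -/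
theorem stmt_3 (K : Set (ℂ × ℂ)) (hK : IsCompact K)
    (hKR : K ⊆ {p : ℂ × ℂ | p.1.im = 0 ∧ p.2.im = 0})
    (p : ℂ × ℂ) (hp : p ∉ K) :
    ∃ P : MvPolynomial (Fin 2) ℂ, P.totalDegree ≤ 2 ∧
      ∀ q ∈ K, ‖MvPolynomial.eval ![q.1, q.2] P‖ < ‖MvPolynomial.eval ![p.1, p.2] P‖ := by
  rcases K.eq_empty_or_nonempty with hKe | hKne
  · exact ⟨1, by simp [totalDegree_one], by simp [hKe]⟩
  by_cases hre : p.1.im = 0 ∧ p.2.im = 0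
  · -- p is a real point
    have hfc : Continuous (fR p.1.re p.2.re) := by unfold fR; fun_prop
    obtain ⟨q₀, hq₀K, hq₀⟩ := hK.exists_isMaxOn hKne hfc.continuousOn
    have hp1 : ((p.1.re : ℂ)) = p.1 := real_pt _ hre.1
    have hp2 : ((p.2.re : ℂ)) = p.2 := real_pt _ hre.2
    refine ⟨sep2 ((fR p.1.re p.2.re q₀ : ℝ) : ℂ) 1 0 (-p.1) 0 1 (-p.2),
      sep2_deg _ _ _ _ _ _ _, fun q hq => ?_⟩
    have hqR := hKR hq
    have hq1 : ((q.1.re : ℂ)) = q.1 := real_pt _ hqR.1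
    have hq2 : ((q.2.re : ℂ)) = q.2 := real_pt _ hqR.2
    have hevq : eval ![q.1, q.2] (sep2 ((fR p.1.re p.2.re q₀ : ℝ) : ℂ) 1 0 (-p.1) 0 1 (-p.2))
        = ((fR p.1.re p.2.re q₀ - fR p.1.re p.2.re q : ℝ) : ℂ) := by
      rw [sep2_eval]
      unfold fR
      push_cast
      rw [hq1, hq2, hp1, hp2]
      ring
    have hevp : eval ![p.1, p.2] (sep2 ((fR p.1.re p.2.re q₀ : ℝ) : ℂ) 1 0 (-p.1) 0 1 (-p.2))
        = ((fR p.1.re p.2.re q₀ : ℝ) : ℂ) := by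
      rw [sep2_eval]; ring
    have hfq0 : 0 ≤ fR p.1.re p.2.re q := by unfold fR; positivity
    have hfqpos : 0 < fR p.1.re p.2.re q := by
      rcases lt_or_eq_of_le hfq0 with h | h
      · exact h
      · exfalso
        unfold fR at h
        have h1 : q.1.re = p.1.re := by nlinarith [sq_nonneg (q.1.re - p.1.re), sq_nonneg (q.2.re - p.2.re)]
        have h2 : q.2.re = p.2.re := by nlinarith [sq_nonneg (q.1.re - p.1.re), sq_nonneg (q.2.re - p.2.re)]
        have : q = p := by
          refine Prod.ext ?_ ?_
          · rw [← hq1, ← hp1, h1]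
          · rw [← hq2, ← hp2, h2]
        exact hp (this ▸ hq)
    have hfqM : fR p.1.re p.2.re q ≤ fR p.1.re p.2.re q₀ := hq₀ hq
    rw [hevq, hevp]
    simp only [Complex.norm_real]
    rw [Real.norm_of_nonneg (by linarith), Real.norm_of_nonneg (by linarith)]
    linarith
  · -- p is not real
    have hs : 0 < p.1.im ^ 2 + p.2.im ^ 2 := by
      rcases (not_and_or.mp hre) with h | h <;> positivity
    have hgc : Continuous fun q => (gR p.1.im p.2.im (-(p.1.im * p.1.re + p.2.im * p.2.re)) q) ^ 2 := by
      unfold gR; fun_prop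
    obtain ⟨q₀, hq₀K, hq₀⟩ := hK.exists_isMaxOn hKne hgc.continuousOn
    obtain ⟨γ, hγ⟩ : ∃ γ : ℝ, γ = -(p.1.im * p.1.re + p.2.im * p.2.re) := ⟨_, rfl⟩
    rw [← hγ] at hq₀ hgc
    obtain ⟨R, hRdef⟩ : ∃ R : ℝ, R = (gR p.1.im p.2.im γ q₀) ^ 2 := ⟨_, rfl⟩
    have hR0 : 0 ≤ R := hRdef ▸ sq_nonneg _
    refine ⟨sep2 ((R + 1 : ℝ) : ℂ) (p.1.im : ℂ) (p.2.im : ℂ) (γ : ℂ) 0 0 0,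
      sep2_deg _ _ _ _ _ _ _, fun q hq => ?_⟩
    have hqR := hKR hq
    have hq1 : ((q.1.re : ℂ)) = q.1 := real_pt _ hqR.1
    have hq2 : ((q.2.re : ℂ)) = q.2 := real_pt _ hqR.2
    have hevq : eval ![q.1, q.2] (sep2 ((R + 1 : ℝ) : ℂ) (p.1.im : ℂ) (p.2.im : ℂ) (γ : ℂ) 0 0 0)
        = ((R + 1 - (gR p.1.im p.2.im γ q) ^ 2 : ℝ) : ℂ) := by
      rw [sep2_eval]
      unfold gR
      push_cast
      rw [hq1, hq2]
      ring
    have hlinp : (p.1.im : ℂ) * p.1 + (p.2.im : ℂ) * p.2 + (γ : ℂ)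
        = ((p.1.im ^ 2 + p.2.im ^ 2 : ℝ) : ℂ) * Complex.I := by
      apply Complex.ext <;>
        simp [hγ, Complex.mul_re, Complex.mul_im, ← Complex.ofReal_pow] <;> ring
    have hevp : eval ![p.1, p.2] (sep2 ((R + 1 : ℝ) : ℂ) (p.1.im : ℂ) (p.2.im : ℂ) (γ : ℂ) 0 0 0)
        = ((R + 1 + (p.1.im ^ 2 + p.2.im ^ 2) ^ 2 : ℝ) : ℂ) := by
      rw [sep2_eval, hlinp]
      have hI : (((p.1.im ^ 2 + p.2.im ^ 2 : ℝ) : ℂ) * Complex.I) ^ 2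
          = -(((p.1.im ^ 2 + p.2.im ^ 2) ^ 2 : ℝ) : ℂ) := by
        rw [mul_pow, Complex.I_sq]
        push_cast
        ring
      rw [hI]
      push_cast
      ring
    have hgq : (gR p.1.im p.2.im γ q) ^ 2 ≤ R := hRdef ▸ hq₀ hq
    rw [hevq, hevp]
    simp only [Complex.norm_real]
    rw [Real.norm_of_nonneg (by nlinarith [sq_nonneg (gR p.1.im p.2.im γ q)]),
      Real.norm_of_nonneg (by positivity)]
    nlinarith
end

section
/- Let p, q be coprime positive integers and K = {(e^{ipθ}, e^{-iqθ}) : 0 ≤ θ ≤ 2π} ⊂ ℂ² be the (p,−q)-torus knot. Then every polynomial P(z,w) with P(0,0) = 1 and sup_K |P| < 1 must have degree at least p + q. -/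
open MvPolynomial Finset


/-- For coprime positive integers `p, q` and the `(p,−q)`-torus knot
`K = {(ζ^p, (conj ζ)^q) : |ζ| = 1}`, every polynomial `P` with `P(0,0) = 1` and
`|P| < 1` on `K` must have total degree at least `p + q`. -/
theorem stmt_4 (p q : ℕ) (hp : 0 < p) (hq : 0 < q) (hpq : Nat.Coprime p q)
    (P : MvPolynomial (Fin 2) ℂ)
    (h0 : MvPolynomial.eval ![(0 : ℂ), 0] P = 1)
    (hK : ∀ ζ : ℂ, ‖ζ‖ = 1 → ‖MvPolynomial.eval ![ζ ^ p, ((starRingEnd ℂ) ζ) ^ q] P‖ < 1) :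
    p + q ≤ P.totalDegree := by
  by_contra hcon
  push_neg at hcon
  set d := P.totalDegree with hd
  set N : ℕ := (p + q) * (d + 1) with hN
  have hNpos : 0 < N := by positivity
  obtain ⟨ζ, hζprim⟩ : ∃ ζ : ℂ, IsPrimitiveRoot ζ N :=
    ⟨_, Complex.isPrimitiveRoot_exp N hNpos.ne'⟩
  have hζN : ζ ^ N = 1 := hζprim.pow_eq_one
  have hζnorm : ‖ζ‖ = 1 := Complex.norm_eq_one_of_pow_eq_one hζN hNpos.ne'
  have hζ0 : ζ ≠ 0 := by
    intro h; rw [h, zero_pow hNpos.ne'] at hζN; exact zero_ne_one hζN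
  -- constant coefficient is 1
  have hc0 : P.coeff 0 = 1 := by
    have : (![(0 : ℂ), 0]) = (0 : Fin 2 → ℂ) := by
      funext i; fin_cases i <;> rfl
    rw [this, MvPolynomial.eval_zero] at h0
    exact h0
  have h0supp : (0 : Fin 2 →₀ ℕ) ∈ P.support := by
    rw [MvPolynomial.mem_support_iff, hc0]; exact one_ne_zero
  -- degree bounds for monomials in the support
  have hdegm : ∀ m ∈ P.support, m 0 + m 1 ≤ d := by
    intro m hm
    have h1 := MvPolynomial.le_totalDegree hm
    rwa [Finsupp.sum_fintype _ _ (fun _ => rfl), Fin.sum_univ_two] at h1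
  -- if the exponent vanishes, the monomial is constant
  have hkzero : ∀ m ∈ P.support, (p : ℤ) * m 0 - q * m 1 = 0 → m = 0 := by
    intro m hm hk
    have hpq' : p * m 0 = q * m 1 := by exact_mod_cast sub_eq_zero.mp hk
    by_contra hm0
    have h01 : m 0 ≠ 0 ∨ m 1 ≠ 0 := by
      by_contra h
      push_neg at h
      exact hm0 (by ext i; fin_cases i <;> simp [h.1, h.2])
    have hq1 : q ∣ m 0 := (Nat.Coprime.dvd_of_dvd_mul_left hpq.symm ⟨m 1, hpq'⟩)
    have hp1 : p ∣ m 1 := (Nat.Coprime.dvd_of_dvd_mul_left hpq ⟨m 0, by linarith [hpq']⟩)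
    have hm00 : m 0 ≠ 0 := by
      intro h'
      rw [h', mul_zero] at hpq'
      rcases Nat.mul_eq_zero.mp hpq'.symm with h'' | h''
      · omega
      · rcases h01 with h | h
        · exact h h'
        · exact h h''
    have hm11 : m 1 ≠ 0 := by
      intro h'
      rw [h', mul_zero] at hpq'
      rcases Nat.mul_eq_zero.mp hpq' with h'' | h''
      · omega
      · exact hm00 h''
    have : q ≤ m 0 := Nat.le_of_dvd (Nat.pos_of_ne_zero hm00) hq1
    have : p ≤ m 1 := Nat.le_of_dvd (Nat.pos_of_ne_zero hm11) hp1
    have := hdegm m hm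
    omega
  -- pointwise evaluation formula
  have key : ∀ j : ℕ, MvPolynomial.eval ![(ζ^j) ^ p, ((starRingEnd ℂ) (ζ^j)) ^ q] P
      = ∑ m ∈ P.support, P.coeff m * ζ ^ ((j : ℤ) * ((p : ℤ) * m 0 - q * m 1)) := by
    intro j
    rw [MvPolynomial.eval_eq']
    refine Finset.sum_congr rfl fun m hm => ?_
    congr 1
    rw [Fin.prod_univ_two]
    have hζj : (ζ : ℂ) ^ j ≠ 0 := pow_ne_zero _ hζ0
    have hconj : (starRingEnd ℂ) (ζ ^ j) = (ζ ^ j)⁻¹ := by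
      rw [Complex.inv_eq_conj]
      rw [norm_pow, hζnorm, one_pow]
    simp only [Matrix.cons_val_zero, Matrix.cons_val_one, Matrix.head_cons, hconj]
    have h1 : ((ζ ^ j) ^ p) ^ (m 0) = ζ ^ ((j : ℤ) * (p * m 0)) := by
      rw [← pow_mul, ← pow_mul, ← zpow_natCast ζ]
      congr 1
    have h2 : ((ζ ^ j)⁻¹ ^ q) ^ (m 1) = ζ ^ (-((j : ℤ) * (q * m 1))) := by
      rw [inv_pow, inv_pow, ← pow_mul, ← pow_mul, ← zpow_natCast ζ, ← zpow_neg]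
      congr 1
    rw [h1, h2, ← zpow_add₀ hζ0]
    congr 1
    ring
  -- geometric sums
  have geom : ∀ m ∈ P.support,
      ∑ j ∈ Finset.range N, ζ ^ ((j : ℤ) * ((p : ℤ) * m 0 - q * m 1))
        = if m = 0 then (N : ℂ) else 0 := by
    intro m hm
    set k : ℤ := (p : ℤ) * m 0 - q * m 1 with hk
    by_cases hm0 : m = 0
    · simp [hm0, hk]
    · rw [if_neg hm0]
      have hkne : k ≠ 0 := fun h => hm0 (hkzero m hm h)
      have hζk : ζ ^ k ≠ 1 := by
        intro h1
        have hdvd : (N : ℤ) ∣ k := (hζprim.zpow_eq_one_iff_dvd k).mp h1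
        have hNle : (N : ℤ) ≤ |k| := Int.le_of_dvd (abs_pos.mpr hkne) ((dvd_abs _ _).mpr hdvd)
        have hb0 : (p : ℤ) * m 0 ≤ (p : ℤ) * d := by
          have := hdegm m hm
          have : (m 0 : ℤ) ≤ d := by exact_mod_cast (by omega : m 0 ≤ d)
          nlinarith [hp, (by exact_mod_cast hp.le : (0:ℤ) ≤ p)]
        have hb1 : (q : ℤ) * m 1 ≤ (q : ℤ) * d := by
          have := hdegm m hm
          have : (m 1 : ℤ) ≤ d := by exact_mod_cast (by omega : m 1 ≤ d)
          nlinarith [(by exact_mod_cast hq.le : (0:ℤ) ≤ q)]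
        have habs : |k| ≤ (p : ℤ) * d + q * d := by
          rw [hk]
          have h1 : (0:ℤ) ≤ (p : ℤ) * m 0 := by positivity
          have h2 : (0:ℤ) ≤ (q : ℤ) * m 1 := by positivity
          rw [abs_sub_le_iff]
          constructor <;> linarith
        have hNlin : (N : ℤ) = ↑p * ↑d + ↑q * ↑d + ↑p + ↑q := by rw [hN]; push_cast; ring
        have hp' : (0:ℤ) < p := by exact_mod_cast hp
        have hq' : (0:ℤ) < q := by exact_mod_cast hq
        linarith
      have : ∑ j ∈ Finset.range N, ζ ^ ((j : ℤ) * k) = ∑ j ∈ Finset.range N, (ζ ^ k) ^ j := by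
        refine Finset.sum_congr rfl fun j _ => ?_
        rw [mul_comm, zpow_mul, zpow_natCast]
      rw [this, geom_sum_eq hζk]
      have : (ζ ^ k) ^ N - 1 = 0 := by
        rw [← zpow_natCast (ζ ^ k) N, ← zpow_mul, mul_comm, zpow_mul, zpow_natCast, hζN,
          one_zpow, sub_self]
      rw [this, zero_div]
  -- total sum equals N
  have hsum : ∑ j ∈ Finset.range N,
      MvPolynomial.eval ![(ζ^j) ^ p, ((starRingEnd ℂ) (ζ^j)) ^ q] P = (N : ℂ) := by
    calc ∑ j ∈ Finset.range N,
        MvPolynomial.eval ![(ζ^j) ^ p, ((starRingEnd ℂ) (ζ^j)) ^ q] P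
        = ∑ j ∈ Finset.range N, ∑ m ∈ P.support,
            P.coeff m * ζ ^ ((j : ℤ) * ((p : ℤ) * m 0 - q * m 1)) := by
          exact Finset.sum_congr rfl fun j _ => key j
      _ = ∑ m ∈ P.support, ∑ j ∈ Finset.range N,
            P.coeff m * ζ ^ ((j : ℤ) * ((p : ℤ) * m 0 - q * m 1)) := Finset.sum_comm
      _ = ∑ m ∈ P.support, P.coeff m * (if m = 0 then (N : ℂ) else 0) := by
          refine Finset.sum_congr rfl fun m hm => ?_
          rw [← Finset.mul_sum, geom m hm]
      _ = (N : ℂ) := by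
          rw [Finset.sum_congr rfl (fun m _ => by rw [mul_ite, mul_zero]),
            Finset.sum_ite_eq' P.support 0 (fun m => P.coeff m * N)]
          rw [if_pos h0supp, hc0, one_mul]
  -- norm contradiction
  have hlt : ‖∑ j ∈ Finset.range N,
      MvPolynomial.eval ![(ζ^j) ^ p, ((starRingEnd ℂ) (ζ^j)) ^ q] P‖ < N := by
    calc ‖∑ j ∈ Finset.range N, MvPolynomial.eval ![(ζ^j) ^ p, ((starRingEnd ℂ) (ζ^j)) ^ q] P‖
        ≤ ∑ j ∈ Finset.range N, ‖MvPolynomial.eval ![(ζ^j) ^ p, ((starRingEnd ℂ) (ζ^j)) ^ q] P‖ :=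
          norm_sum_le _ _
      _ < ∑ j ∈ Finset.range N, 1 := by
          refine Finset.sum_lt_sum_of_nonempty (by simp [hNpos.ne']) fun j _ => ?_
          exact hK (ζ ^ j) (by rw [norm_pow, hζnorm, one_pow])
      _ = N := by simp
  rw [hsum] at hlt
  simp at hlt
end

section
/- Let K₂ = {(e^{2iθ}, e^{-iθ}) : θ ∈ [0,2π]} ⊂ ℂ² and for λ ≥ 0 let H_λ = {(z,w) ∈ ℂ² : zw − z − w = λ}. Then (0,0) ∈ H₀ and H_λ ∩ K₂ = ∅ for all λ ∈ [0,∞). -/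
/-- For `K₂ = {(ζ², conj ζ) : |ζ| = 1}` and `H_λ = {zw − z − w = λ}`, `λ ≥ 0`:
`(0,0) ∈ H₀` and `H_λ ∩ K₂ = ∅` for all `λ ≥ 0`. -/
theorem stmt_6 :
    ((0 : ℂ) * 0 - 0 - 0 = (0 : ℝ)) ∧
    ∀ ζ : ℂ, ‖ζ‖ = 1 → ∀ lam : ℝ, 0 ≤ lam →
      ζ ^ 2 * (starRingEnd ℂ) ζ - ζ ^ 2 - (starRingEnd ℂ) ζ ≠ (lam : ℂ) := by
  refine ⟨by norm_num, ?_⟩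
  intro ζ hζ lam hlam heq
  have h1 : ζ.re * ζ.re + ζ.im * ζ.im = 1 := by
    rw [← Complex.normSq_apply, ← Complex.sq_norm, hζ]; norm_num
  rw [Complex.ext_iff] at heq
  simp [Complex.mul_re, Complex.mul_im, pow_two] at heq
  obtain ⟨hre, him⟩ := heq
  have hb : ζ.im * (1 - ζ.re) = 0 := by
    linear_combination (1/2 : ℝ) * him - (ζ.im / 2) * h1
  have hr : ζ.im * ζ.im - ζ.re * ζ.re = lam := by
    linear_combination hre - ζ.re * h1
  rcases mul_eq_zero.mp hb with hb0 | hb1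
  · nlinarith
  · nlinarith
end

section
/- Let K₃ = {(e^{3iθ}, e^{-iθ}) : θ ∈ [0,2π]} ⊂ ℂ² and for λ ≥ 0 let H_λ = {(z,w) : −2zw + z − 2w = λ}. Then (0,0) ∈ H₀ and H_λ ∩ K₃ = ∅ for all λ ≥ 0. -/
/-- For `K₃ = {(ζ³, conj ζ) : |ζ| = 1}` and `H_λ = {−2zw + z − 2w = λ}`, `λ ≥ 0`:
`(0,0) ∈ H₀` and `H_λ ∩ K₃ = ∅` for all `λ ≥ 0`. -/
theorem stmt_7 :
    (-2 * ((0 : ℂ) * 0) + 0 - 2 * 0 = (0 : ℝ)) ∧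
    ∀ ζ : ℂ, ‖ζ‖ = 1 → ∀ lam : ℝ, 0 ≤ lam →
      -2 * (ζ ^ 3 * (starRingEnd ℂ) ζ) + ζ ^ 3 - 2 * (starRingEnd ℂ) ζ ≠ (lam : ℂ) := by
  refine ⟨by norm_num, ?_⟩
  intro ζ hζ lam hlam h
  have h1 : ζ.re ^ 2 + ζ.im ^ 2 = 1 := by
    have h2 : Complex.normSq ζ = 1 := by
      rw [Complex.normSq_eq_norm_sq, hζ]; norm_num
    rw [Complex.normSq_apply] at h2
    nlinarith [h2]
  rw [Complex.ext_iff] at h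
  obtain ⟨hre, him⟩ := h
  simp [Complex.mul_re, Complex.mul_im, pow_succ] at hre him
  set a := ζ.re; set b := ζ.im
  have hfac : b * (2*a - 1)^2 = 0 := by
    linear_combination him + (4*a*b + b) * h1
  rcases mul_eq_zero.mp hfac with hb | ha
  · nlinarith [hre, h1, hlam, sq_nonneg (a+1), sq_nonneg (a-1)]
  · have ha2 : a = 1/2 := by nlinarith [sq_nonneg (2*a-1)]
    nlinarith [hre, h1, hlam]
end

section
/- Let K = {z₀, z₁, …, z_n} be n+1 distinct points in ℂ and w ∉ K. Then w lies in the n-polynomial hull of K if and only if all the complex numbers (z_i − w)·∏_{j ≠ i}(z_i − z_j), i = 0,…,n, lie on the same real half-line from the origin (i.e. all are positive real multiples of a single nonzero complex number). -/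
open Finset Polynomial


/-- `w` lies in the `n`-polynomial hull of `n+1` distinct points `z₀, …, z_n` iff the
values `(z_i − w) ∏_{j ≠ i}(z_i − z_j)` all lie on the same real half-line from the
origin. -/
theorem stmt_9 (n : ℕ) (z : Fin (n + 1) → ℂ) (hinj : Function.Injective z)
    (w : ℂ) (hw : w ∉ Set.range z) :
    (∀ P : Polynomial ℂ, P.natDegree ≤ n →
        ‖P.eval w‖ ≤ Finset.univ.sup' Finset.univ_nonempty fun i => ‖P.eval (z i)‖) ↔
    ∃ u : ℂ, ‖u‖ = 1 ∧ ∀ i : Fin (n + 1), ∃ r : ℝ, 0 < r ∧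
      (z i - w) * ∏ j ∈ Finset.univ.erase i, (z i - z j) = (r : ℂ) * u := by
  classical
  have hvs : Set.InjOn z ↑(Finset.univ : Finset (Fin (n + 1))) := hinj.injOn
  have hcard : (#(Finset.univ : Finset (Fin (n + 1))) : ℕ) = n + 1 := by simp
  set ℓ : Fin (n + 1) → ℂ := fun i => (Lagrange.basis Finset.univ z i).eval w with hℓ
  have hwz : ∀ j, w - z j ≠ 0 := by
    intro j h
    exact hw ⟨j, by linear_combination -h⟩
  have hzz : ∀ i j : Fin (n + 1), i ≠ j → z i - z j ≠ 0 := by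
    intro i j hij h
    exact hij (hinj (by linear_combination h))
  have hℓval : ∀ i, ℓ i = ∏ j ∈ Finset.univ.erase i, ((z i - z j)⁻¹ * (w - z j)) := by
    intro i
    simp [hℓ, Lagrange.basis, Lagrange.basisDivisor, eval_prod]
  have hℓne : ∀ i, ℓ i ≠ 0 := by
    intro i
    rw [hℓval]
    exact prod_ne_zero_iff.2 fun j hj =>
      mul_ne_zero (inv_ne_zero (hzz i j (mem_erase.1 hj).1.symm)) (hwz j)
  have hsum : ∑ i, ℓ i = 1 := by
    have h := Lagrange.sum_basis hvs Finset.univ_nonempty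
    have := congrArg (Polynomial.eval w) h
    simpa [Polynomial.eval_finset_sum] using this
  set Q : ℂ := ∏ j, (w - z j) with hQdef
  have hQ : Q ≠ 0 := prod_ne_zero_iff.2 fun j _ => hwz j
  have hla : ∀ i, ℓ i * ((z i - w) * ∏ j ∈ Finset.univ.erase i, (z i - z j)) = -Q := by
    intro i
    rw [hℓval, prod_mul_distrib]
    rw [show ((∏ j ∈ Finset.univ.erase i, (z i - z j)⁻¹) *
        (∏ j ∈ Finset.univ.erase i, (w - z j))) *
        ((z i - w) * ∏ j ∈ Finset.univ.erase i, (z i - z j)) =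
        ((∏ j ∈ Finset.univ.erase i, (z i - z j)⁻¹) *
        (∏ j ∈ Finset.univ.erase i, (z i - z j))) *
        ((z i - w) * ∏ j ∈ Finset.univ.erase i, (w - z j)) by ring]
    rw [← prod_mul_distrib]
    have h1 : ∏ j ∈ Finset.univ.erase i, ((z i - z j)⁻¹ * (z i - z j)) = 1 :=
      prod_eq_one fun j hj => inv_mul_cancel₀ (hzz i j (mem_erase.1 hj).1.symm)
    rw [h1, one_mul, hQdef, ← Finset.mul_prod_erase _ _ (mem_univ i)]
    ring
  have hinterp : ∀ P : Polynomial ℂ, P.natDegree ≤ n →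
      P.eval w = ∑ i, P.eval (z i) * ℓ i := by
    intro P hP
    have hdeg : P.degree < (#(Finset.univ : Finset (Fin (n + 1))) : ℕ) := by
      rw [hcard]
      calc P.degree ≤ (P.natDegree : WithBot ℕ) := Polynomial.degree_le_natDegree
        _ < ((n + 1 : ℕ) : WithBot ℕ) := by exact_mod_cast Nat.lt_succ_of_le hP
    have h := Lagrange.eq_interpolate hvs hdeg
    conv_lhs => rw [h]
    simp [Lagrange.interpolate_apply, Polynomial.eval_finset_sum, hℓ]
  constructor
  · -- forward direction
    intro H
    set c : Fin (n + 1) → ℂ := fun i => (starRingEnd ℂ) (ℓ i) / ‖ℓ i‖ with hc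
    have hcnorm : ∀ i, ‖c i‖ = 1 := by
      intro i
      simp [hc, norm_div]
      exact hℓne i
    have hcl : ∀ i, c i * ℓ i = ((‖ℓ i‖ : ℝ) : ℂ) := by
      intro i
      have hx : ((‖ℓ i‖ : ℝ) : ℂ) ≠ 0 := by
        exact_mod_cast norm_ne_zero_iff.2 (hℓne i)
      rw [hc]
      field_simp
      rw [mul_comm, Complex.mul_conj, Complex.normSq_eq_norm_sq]
      have hx' : ((‖ℓ i‖ : ℝ) : ℂ) ≠ 0 := by
        exact_mod_cast norm_ne_zero_iff.2 (hℓne i)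
      push_cast
      rw [sq]
    set P : Polynomial ℂ := Lagrange.interpolate Finset.univ z c with hP
    have hPdeg : P.natDegree ≤ n := by
      have h2 := Lagrange.degree_interpolate_lt c hvs
      rw [hcard] at h2
      by_cases h0 : P = 0
      · simp [h0]
      · exact Nat.lt_succ_iff.1 ((Polynomial.natDegree_lt_iff_degree_lt h0).2
          (by exact_mod_cast h2))
    have hPeval : ∀ i, P.eval (z i) = c i := fun i =>
      Lagrange.eval_interpolate_at_node c hvs (mem_univ i)
    have hPw : P.eval w = ((∑ i, ‖ℓ i‖ : ℝ) : ℂ) := by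
      rw [hP, Lagrange.interpolate_apply, Polynomial.eval_finset_sum]
      push_cast
      refine Finset.sum_congr rfl fun i _ => ?_
      simp only [Polynomial.eval_mul, Polynomial.eval_C]
      exact hcl i
    have hsum_le : ∑ i, ‖ℓ i‖ ≤ 1 := by
      have h1 := H P hPdeg
      have h2 : (Finset.univ.sup' Finset.univ_nonempty fun i => ‖P.eval (z i)‖) = 1 := by
        rw [show (fun i => ‖P.eval (z i)‖) = fun _ => (1 : ℝ) from funext fun i => by
          rw [hPeval, hcnorm]]
        exact Finset.sup'_const _ 1
      rw [h2, hPw] at h1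
      have h3 : 0 ≤ ∑ i, ‖ℓ i‖ := Finset.sum_nonneg fun i _ => norm_nonneg _
      rwa [Complex.norm_real, Real.norm_eq_abs, abs_of_nonneg h3] at h1
    have hre_sum : ∑ i, (ℓ i).re = 1 := by
      have := congrArg Complex.re hsum
      simpa [Complex.re_sum] using this
    have heq : ∀ i, ‖ℓ i‖ = (ℓ i).re := by
      have h0 : ∑ i, (‖ℓ i‖ - (ℓ i).re) = 0 := by
        have hle : ∑ i, (‖ℓ i‖ - (ℓ i).re) ≤ 0 := by
          rw [Finset.sum_sub_distrib, hre_sum]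
          linarith
        have hge : 0 ≤ ∑ i, (‖ℓ i‖ - (ℓ i).re) :=
          Finset.sum_nonneg fun i _ => by
            have := Complex.re_le_norm (ℓ i)
            linarith
        linarith
      intro i
      have := (Finset.sum_eq_zero_iff_of_nonneg fun i _ => by
        have := Complex.re_le_norm (ℓ i)
        linarith : ∑ i, (‖ℓ i‖ - (ℓ i).re) = 0 ↔ _).1 h0 i (mem_univ i)
      linarith
    have hpos : ∀ i, 0 < (ℓ i).re ∧ ℓ i = (((ℓ i).re : ℝ) : ℂ) := by
      intro i
      have h1 : 0 < ‖ℓ i‖ := norm_pos_iff.2 (hℓne i)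
      have h2 := heq i
      have him : (ℓ i).im = 0 := by
        have h3 : ‖ℓ i‖ ^ 2 = (ℓ i).re ^ 2 + (ℓ i).im ^ 2 := by
          rw [Complex.sq_norm, Complex.normSq_apply]
          ring
        nlinarith
      exact ⟨h2 ▸ h1, Complex.ext rfl (by simp [him])⟩
    refine ⟨-Q / ‖Q‖, ?_, ?_⟩
    · rw [norm_div, norm_neg]
      simp only [Complex.norm_real, Real.norm_eq_abs, abs_norm]
      exact div_self (norm_ne_zero_iff.2 hQ)
    · intro i
      obtain ⟨hr, hℓr⟩ := hpos i
      refine ⟨‖Q‖ / (ℓ i).re, div_pos (norm_pos_iff.2 hQ) hr, ?_⟩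
      have ha : ℓ i * ((z i - w) * ∏ j ∈ Finset.univ.erase i, (z i - z j)) = -Q := hla i
      rw [hℓr] at ha
      have hrne : (((ℓ i).re : ℝ) : ℂ) ≠ 0 := by exact_mod_cast hr.ne'
      have hQne : ((‖Q‖ : ℝ) : ℂ) ≠ 0 := by
        exact_mod_cast (norm_ne_zero_iff.2 hQ)
      have h2 : (z i - w) * ∏ j ∈ Finset.univ.erase i, (z i - z j)
          = -Q / (((ℓ i).re : ℝ) : ℂ) := by
        rw [eq_div_iff hrne]
        linear_combination ha
      rw [h2, show ((‖Q‖ / (ℓ i).re : ℝ) : ℂ) = ((‖Q‖ : ℝ) : ℂ) / (((ℓ i).re : ℝ) : ℂ) by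
        push_cast; ring]
      rw [div_mul_div_comm, mul_comm ((‖Q‖ : ℝ) : ℂ) (-Q), mul_div_mul_right _ _ hQne]
  · -- backward direction
    rintro ⟨u, hu, hru⟩
    choose r hrpos hr using hru
    have hune : u ≠ 0 := by
      intro h
      rw [h, norm_zero] at hu
      norm_num at hu
    have hrne : ∀ i, ((r i : ℝ) : ℂ) ≠ 0 := fun i => by exact_mod_cast (hrpos i).ne'
    have hℓ2 : ∀ i, ℓ i = -Q / ((r i : ℂ) * u) := by
      intro i
      have h1 := hla i
      rw [hr i] at h1
      rw [eq_div_iff (mul_ne_zero (hrne i) hune)]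
      linear_combination h1
    set t : ℝ := ∑ i, (r i)⁻¹ with ht
    have htpos : 0 < t := Finset.sum_pos (fun i _ => inv_pos.2 (hrpos i)) univ_nonempty
    have hQu : -Q / u = ((t⁻¹ : ℝ) : ℂ) := by
      have h1 : (1 : ℂ) = (-Q / u) * (t : ℂ) := by
        rw [← hsum]
        push_cast [ht]
        rw [Finset.mul_sum]
        refine Finset.sum_congr rfl fun i _ => ?_
        rw [hℓ2 i]
        ring
      rw [Complex.ofReal_inv]
      exact eq_inv_of_mul_eq_one_right (by linear_combination -h1)
    have hℓ3 : ∀ i, ℓ i = (((r i)⁻¹ * t⁻¹ : ℝ) : ℂ) := by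
      intro i
      have h2 : ℓ i = ((r i : ℝ) : ℂ)⁻¹ * (-Q / u) := by rw [hℓ2 i]; ring
      rw [h2, hQu]
      push_cast
      ring
    have hρpos : ∀ i, 0 < (r i)⁻¹ * t⁻¹ := fun i =>
      mul_pos (inv_pos.2 (hrpos i)) (inv_pos.2 htpos)
    have hρsum : ∑ i, (r i)⁻¹ * t⁻¹ = 1 := by
      have h1 : ((∑ i, (r i)⁻¹ * t⁻¹ : ℝ) : ℂ) = 1 := by
        push_cast
        rw [← hsum]
        exact (Finset.sum_congr rfl fun i _ => by rw [hℓ3 i]; push_cast; ring).symm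
      exact_mod_cast h1
    intro P hP
    rw [hinterp P hP]
    set M : ℝ := Finset.univ.sup' Finset.univ_nonempty fun i => ‖P.eval (z i)‖ with hM
    calc ‖∑ i, P.eval (z i) * ℓ i‖ ≤ ∑ i, ‖P.eval (z i) * ℓ i‖ := norm_sum_le _ _
      _ = ∑ i, ‖P.eval (z i)‖ * ((r i)⁻¹ * t⁻¹) := by
          refine Finset.sum_congr rfl fun i _ => ?_
          rw [norm_mul, hℓ3 i, Complex.norm_real, Real.norm_eq_abs,
            abs_of_pos (hρpos i)]
      _ ≤ ∑ i, M * ((r i)⁻¹ * t⁻¹) := by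
          refine Finset.sum_le_sum fun i _ => ?_
          exact mul_le_mul_of_nonneg_right
            (Finset.le_sup' (fun j => ‖P.eval (z j)‖) (mem_univ i)) (hρpos i).le
      _ = M := by rw [← Finset.mul_sum, hρsum, mul_one]
end

section
/- Three distinct non-collinear points z₀, z₁, z₂ ∈ ℂ fail to be 2-polynomially convex if and only if the triangle with vertices z₀, z₁, z₂ is acute; in that case the unique extra point of the 2-polynomial hull is the orthocenter of the triangle. -/
open Polynomial Complex
local notation "conj'" => starRingEnd ℂ

lemma sq_neg_re_eq_zero {s : ℂ} {m : ℝ} (h : s^2 = (m:ℂ)) (hm : m < 0) : s.re = 0 := by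
  have h1 : (s^2).re = m := by rw [h]; simp
  have h2 : (s^2).im = 0 := by rw [h]; simp
  rw [pow_two, Complex.mul_re] at h1
  rw [pow_two, Complex.mul_im] at h2
  rcases mul_eq_zero.mp (by linarith : s.re * s.im = 0) with h3 | h3
  · exact h3
  · nlinarith

lemma real_of_re_eq_norm {x : ℂ} (h : x.re = ‖x‖) : x = (x.re : ℂ) := by
  have h1 : ‖x‖ ^ 2 = Complex.normSq x := Complex.sq_norm x
  rw [Complex.normSq_apply] at h1
  have h2 : x.re = ‖x‖ := h
  rw [← h2] at h1
  have h3 : x.im * x.im = 0 := by nlinarith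
  have him : x.im = 0 := mul_self_eq_zero.mp h3
  exact Complex.ext (by simp) (by simp [him])

lemma interp_eval (z₀ z₁ z₂ w : ℂ) (h01 : z₀ ≠ z₁) (h02 : z₀ ≠ z₂) (h12 : z₁ ≠ z₂)
    (c₀ c₁ c₂ : ℂ) :
    c₀ + c₁*w + c₂*w^2 =
      (w-z₁)*(w-z₂)/((z₀-z₁)*(z₀-z₂)) * (c₀ + c₁*z₀ + c₂*z₀^2)
    + (w-z₀)*(w-z₂)/((z₁-z₀)*(z₁-z₂)) * (c₀ + c₁*z₁ + c₂*z₁^2)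
    + (w-z₀)*(w-z₁)/((z₂-z₀)*(z₂-z₁)) * (c₀ + c₁*z₂ + c₂*z₂^2) := by
  have h01' : z₀ - z₁ ≠ 0 := sub_ne_zero.mpr h01
  have h02' : z₀ - z₂ ≠ 0 := sub_ne_zero.mpr h02
  have h12' : z₁ - z₂ ≠ 0 := sub_ne_zero.mpr h12
  have h10' : z₁ - z₀ ≠ 0 := sub_ne_zero.mpr h01.symm
  have h20' : z₂ - z₀ ≠ 0 := sub_ne_zero.mpr h02.symm
  have h21' : z₂ - z₁ ≠ 0 := sub_ne_zero.mpr h12.symm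
  field_simp
  ring

lemma interp_exists (z₀ z₁ z₂ : ℂ) (h01 : z₀ ≠ z₁) (h02 : z₀ ≠ z₂) (h12 : z₁ ≠ z₂)
    (v₀ v₁ v₂ : ℂ) :
    ∃ P : Polynomial ℂ, P.natDegree ≤ 2 ∧ P.eval z₀ = v₀ ∧ P.eval z₁ = v₁ ∧ P.eval z₂ = v₂ := by
  have h01' : z₀ - z₁ ≠ 0 := sub_ne_zero.mpr h01
  have h02' : z₀ - z₂ ≠ 0 := sub_ne_zero.mpr h02
  have h12' : z₁ - z₂ ≠ 0 := sub_ne_zero.mpr h12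
  have h10' : z₁ - z₀ ≠ 0 := sub_ne_zero.mpr h01.symm
  have h20' : z₂ - z₀ ≠ 0 := sub_ne_zero.mpr h02.symm
  have h21' : z₂ - z₁ ≠ 0 := sub_ne_zero.mpr h12.symm
  refine ⟨C (v₀/((z₀-z₁)*(z₀-z₂))) * ((X - C z₁)*(X - C z₂))
       + C (v₁/((z₁-z₀)*(z₁-z₂))) * ((X - C z₀)*(X - C z₂))
       + C (v₂/((z₂-z₀)*(z₂-z₁))) * ((X - C z₀)*(X - C z₁)), ?_, ?_, ?_, ?_⟩
  · refine le_trans (natDegree_add_le _ _) (max_le (le_trans (natDegree_add_le _ _) (max_le ?_ ?_)) ?_) <;>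
    · refine le_trans (natDegree_mul_le) ?_
      simp only [natDegree_C, zero_add]
      refine le_trans (natDegree_mul_le) ?_
      simp [natDegree_X_sub_C]
  · simp only [eval_add, eval_mul, eval_C, eval_sub, eval_X, sub_self, mul_zero, zero_mul, add_zero]
    field_simp
  · simp only [eval_add, eval_mul, eval_C, eval_sub, eval_X, sub_self, mul_zero, zero_mul, add_zero]
    field_simp
    ring
  · simp only [eval_add, eval_mul, eval_C, eval_sub, eval_X, sub_self, mul_zero, zero_mul, add_zero]
    field_simp
    ring

lemma G0 (u v : ℂ) :
    ((((conj' u * v).re : ℝ) : ℂ) * I * (u - v) - (((conj' u * v).im : ℝ) : ℂ) * u) *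
      ((((conj' u * v).re : ℝ) : ℂ) * I * (u - v) - (((conj' u * v).im : ℝ) : ℂ) * v)
    = ((((normSq u - (conj' u * v).re) * (normSq v - (conj' u * v).re)) : ℝ) : ℂ) * (u * v) := by
  apply Complex.ext <;>
    simp only [Complex.mul_re, Complex.mul_im, Complex.sub_re, Complex.sub_im, Complex.add_re,
      Complex.add_im, Complex.ofReal_re, Complex.ofReal_im, Complex.I_re, Complex.I_im,
      Complex.conj_re, Complex.conj_im, Complex.normSq_apply] <;> ring

lemma G1 (u v : ℂ) :
    ((((conj' u * v).re : ℝ) : ℂ) * I * (u - v)) *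
      ((((conj' u * v).re : ℝ) : ℂ) * I * (u - v) - (((conj' u * v).im : ℝ) : ℂ) * v)
    = ((((conj' u * v).re * (normSq v - (conj' u * v).re)) : ℝ) : ℂ) * (u * (u - v)) := by
  apply Complex.ext <;>
    simp only [Complex.mul_re, Complex.mul_im, Complex.sub_re, Complex.sub_im, Complex.add_re,
      Complex.add_im, Complex.ofReal_re, Complex.ofReal_im, Complex.I_re, Complex.I_im,
      Complex.conj_re, Complex.conj_im, Complex.normSq_apply] <;> ring

lemma G2 (u v : ℂ) :
    ((((conj' u * v).re : ℝ) : ℂ) * I * (u - v)) *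
      ((((conj' u * v).re : ℝ) : ℂ) * I * (u - v) - (((conj' u * v).im : ℝ) : ℂ) * u)
    = ((((conj' u * v).re * (normSq u - (conj' u * v).re)) : ℝ) : ℂ) * (v * (v - u)) := by
  apply Complex.ext <;>
    simp only [Complex.mul_re, Complex.mul_im, Complex.sub_re, Complex.sub_im, Complex.add_re,
      Complex.add_im, Complex.ofReal_re, Complex.ofReal_im, Complex.I_re, Complex.I_im,
      Complex.conj_re, Complex.conj_im, Complex.normSq_apply] <;> ring

lemma eval3 {P : Polynomial ℂ} (hP : P.natDegree ≤ 2) (x : ℂ) :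
    P.eval x = P.coeff 0 + P.coeff 1 * x + P.coeff 2 * x^2 := by
  have h3 : P.natDegree < 3 := by omega
  rw [Polynomial.eval_eq_sum_range' h3]
  simp [Finset.sum_range_succ]

lemma hull_char (z₀ z₁ z₂ w : ℂ) (h01 : z₀ ≠ z₁) (h02 : z₀ ≠ z₂) (h12 : z₁ ≠ z₂)
    (hw0 : w ≠ z₀) (hw1 : w ≠ z₁) (hw2 : w ≠ z₂) :
    (∀ P : Polynomial ℂ, P.natDegree ≤ 2 →
        ‖P.eval w‖ ≤ max ‖P.eval z₀‖ (max ‖P.eval z₁‖ ‖P.eval z₂‖)) ↔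
    ((∃ r : ℝ, 0 < r ∧ (w-z₁)*(w-z₂) = (r:ℂ) * ((z₀-z₁)*(z₀-z₂))) ∧
     (∃ r : ℝ, 0 < r ∧ (w-z₀)*(w-z₂) = (r:ℂ) * ((z₁-z₀)*(z₁-z₂))) ∧
     (∃ r : ℝ, 0 < r ∧ (w-z₀)*(w-z₁) = (r:ℂ) * ((z₂-z₀)*(z₂-z₁)))) := by
  have h01' : z₀ - z₁ ≠ 0 := sub_ne_zero.mpr h01
  have h02' : z₀ - z₂ ≠ 0 := sub_ne_zero.mpr h02
  have h12' : z₁ - z₂ ≠ 0 := sub_ne_zero.mpr h12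
  have h10' : z₁ - z₀ ≠ 0 := sub_ne_zero.mpr h01.symm
  have h20' : z₂ - z₀ ≠ 0 := sub_ne_zero.mpr h02.symm
  have h21' : z₂ - z₁ ≠ 0 := sub_ne_zero.mpr h12.symm
  have hw0' : w - z₀ ≠ 0 := sub_ne_zero.mpr hw0
  have hw1' : w - z₁ ≠ 0 := sub_ne_zero.mpr hw1
  have hw2' : w - z₂ ≠ 0 := sub_ne_zero.mpr hw2
  set D₀ : ℂ := (z₀-z₁)*(z₀-z₂) with hD₀def
  set D₁ : ℂ := (z₁-z₀)*(z₁-z₂) with hD₁def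
  set D₂ : ℂ := (z₂-z₀)*(z₂-z₁) with hD₂def
  have hD₀ : D₀ ≠ 0 := mul_ne_zero h01' h02'
  have hD₁ : D₁ ≠ 0 := mul_ne_zero h10' h12'
  have hD₂ : D₂ ≠ 0 := mul_ne_zero h20' h21'
  set L₀ : ℂ := (w-z₁)*(w-z₂)/D₀ with hL₀def
  set L₁ : ℂ := (w-z₀)*(w-z₂)/D₁ with hL₁def
  set L₂ : ℂ := (w-z₀)*(w-z₁)/D₂ with hL₂def
  have hL₀ : L₀ ≠ 0 := div_ne_zero (mul_ne_zero hw1' hw2') hD₀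
  have hL₁ : L₁ ≠ 0 := div_ne_zero (mul_ne_zero hw0' hw2') hD₁
  have hL₂ : L₂ ≠ 0 := div_ne_zero (mul_ne_zero hw0' hw1') hD₂
  have hsum : L₀ + L₁ + L₂ = 1 := by
    have := interp_eval z₀ z₁ z₂ w h01 h02 h12 1 0 0
    simp only [zero_mul, add_zero, mul_one] at this
    rw [hL₀def, hL₁def, hL₂def, hD₀def, hD₁def, hD₂def]
    linear_combination -this
  have hprod : ∀ r : ℝ, (L₀ = (r:ℂ) ↔ (w-z₁)*(w-z₂) = (r:ℂ) * D₀) := by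
    intro r
    rw [hL₀def, div_eq_iff hD₀]
  have hprod1 : ∀ r : ℝ, (L₁ = (r:ℂ) ↔ (w-z₀)*(w-z₂) = (r:ℂ) * D₁) := by
    intro r
    rw [hL₁def, div_eq_iff hD₁]
  have hprod2 : ∀ r : ℝ, (L₂ = (r:ℂ) ↔ (w-z₀)*(w-z₁) = (r:ℂ) * D₂) := by
    intro r
    rw [hL₂def, div_eq_iff hD₂]
  constructor
  · intro H
    -- forward: build the unimodular interpolation polynomial
    obtain ⟨P, hPdeg, hP0, hP1, hP2⟩ := interp_exists z₀ z₁ z₂ h01 h02 h12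
      ((‖L₀‖:ℂ)/L₀) ((‖L₁‖:ℂ)/L₁) ((‖L₂‖:ℂ)/L₂)
    have hnorm : ∀ Lx : ℂ, Lx ≠ 0 → ‖(‖Lx‖:ℂ)/Lx‖ = 1 := by
      intro Lx hLx
      rw [norm_div, Complex.norm_real, norm_norm, div_self (norm_ne_zero_iff.mpr hLx)]
    have hPw : P.eval w = ((‖L₀‖ + ‖L₁‖ + ‖L₂‖ : ℝ) : ℂ) := by
      rw [eval3 hPdeg w]
      rw [interp_eval z₀ z₁ z₂ w h01 h02 h12 (P.coeff 0) (P.coeff 1) (P.coeff 2)]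
      rw [← eval3 hPdeg z₀, ← eval3 hPdeg z₁, ← eval3 hPdeg z₂, hP0, hP1, hP2]
      rw [← hD₀def, ← hD₁def, ← hD₂def, ← hL₀def, ← hL₁def, ← hL₂def]
      field_simp
      push_cast
      rfl
    have hb := H P hPdeg
    rw [hP0, hP1, hP2, hPw, hnorm _ hL₀, hnorm _ hL₁, hnorm _ hL₂] at hb
    simp only [max_self] at hb
    rw [Complex.norm_real] at hb
    have habs : ‖L₀‖ + ‖L₁‖ + ‖L₂‖ ≤ 1 := by
      have h0 : (0:ℝ) ≤ ‖L₀‖ + ‖L₁‖ + ‖L₂‖ := by positivity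
      rw [Real.norm_eq_abs] at hb
      rwa [_root_.abs_of_nonneg h0] at hb
    have hre : (L₀.re + L₁.re + L₂.re) = 1 := by
      have := congrArg Complex.re hsum
      simpa using this
    have hr0 : L₀.re ≤ ‖L₀‖ := Complex.re_le_norm L₀
    have hr1 : L₁.re ≤ ‖L₁‖ := Complex.re_le_norm L₁
    have hr2 : L₂.re ≤ ‖L₂‖ := Complex.re_le_norm L₂
    have he0 : L₀.re = ‖L₀‖ := by linarith
    have he1 : L₁.re = ‖L₁‖ := by linarith
    have he2 : L₂.re = ‖L₂‖ := by linarith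
    have hp0 : 0 < L₀.re := by rw [he0]; exact norm_pos_iff.mpr hL₀
    have hp1 : 0 < L₁.re := by rw [he1]; exact norm_pos_iff.mpr hL₁
    have hp2 : 0 < L₂.re := by rw [he2]; exact norm_pos_iff.mpr hL₂
    exact ⟨⟨L₀.re, hp0, (hprod _).mp (real_of_re_eq_norm he0)⟩,
      ⟨L₁.re, hp1, (hprod1 _).mp (real_of_re_eq_norm he1)⟩,
      ⟨L₂.re, hp2, (hprod2 _).mp (real_of_re_eq_norm he2)⟩⟩
  · rintro ⟨⟨r₀, hr₀, he₀⟩, ⟨r₁, hr₁, he₁⟩, ⟨r₂, hr₂, he₂⟩⟩ P hPdeg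
    have hLr0 : L₀ = (r₀:ℂ) := (hprod _).mpr he₀
    have hLr1 : L₁ = (r₁:ℂ) := (hprod1 _).mpr he₁
    have hLr2 : L₂ = (r₂:ℂ) := (hprod2 _).mpr he₂
    have hrsum : r₀ + r₁ + r₂ = 1 := by
      have : ((r₀ + r₁ + r₂ : ℝ) : ℂ) = ((1:ℝ):ℂ) := by
        push_cast
        rw [← hLr0, ← hLr1, ← hLr2]
        exact_mod_cast hsum
      exact_mod_cast this
    have hPw : P.eval w = (r₀:ℂ) * P.eval z₀ + (r₁:ℂ) * P.eval z₁ + (r₂:ℂ) * P.eval z₂ := by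
      rw [eval3 hPdeg w, eval3 hPdeg z₀, eval3 hPdeg z₁, eval3 hPdeg z₂]
      rw [interp_eval z₀ z₁ z₂ w h01 h02 h12 (P.coeff 0) (P.coeff 1) (P.coeff 2)]
      rw [← hD₀def, ← hD₁def, ← hD₂def, ← hL₀def, ← hL₁def, ← hL₂def, hLr0, hLr1, hLr2]
    set M : ℝ := max ‖P.eval z₀‖ (max ‖P.eval z₁‖ ‖P.eval z₂‖) with hM
    have hM0 : ‖P.eval z₀‖ ≤ M := le_max_left _ _
    have hM1 : ‖P.eval z₁‖ ≤ M := le_trans (le_max_left _ _) (le_max_right _ _)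
    have hM2 : ‖P.eval z₂‖ ≤ M := le_trans (le_max_right _ _) (le_max_right _ _)
    calc ‖P.eval w‖ = ‖(r₀:ℂ) * P.eval z₀ + (r₁:ℂ) * P.eval z₁ + (r₂:ℂ) * P.eval z₂‖ := by
          rw [hPw]
      _ ≤ ‖(r₀:ℂ) * P.eval z₀‖ + ‖(r₁:ℂ) * P.eval z₁‖ + ‖(r₂:ℂ) * P.eval z₂‖ := norm_add₃_le
      _ = r₀ * ‖P.eval z₀‖ + r₁ * ‖P.eval z₁‖ + r₂ * ‖P.eval z₂‖ := by
          simp [Complex.norm_real, Real.norm_eq_abs, abs_of_pos hr₀, abs_of_pos hr₁,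
            abs_of_pos hr₂]
      _ ≤ r₀ * M + r₁ * M + r₂ * M := by
          gcongr
      _ = M := by rw [← add_mul, ← add_mul, hrsum, one_mul]


lemma angle_lt_iff {x y : ℂ} (hx : x ≠ 0) (hy : y ≠ 0) :
    InnerProductGeometry.angle x y < Real.pi / 2 ↔ 0 < (conj' x * y).re := by
  rw [InnerProductGeometry.angle, Real.arccos_lt_pi_div_two, mul_comm (conj' x) y, ← Complex.inner]
  have hxy : (0:ℝ) < ‖x‖ * ‖y‖ := mul_pos (norm_pos_iff.mpr hx) (norm_pos_iff.mpr hy)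
  constructor
  · intro h
    by_contra h'
    push_neg at h'
    have : (inner ℝ x y : ℝ) / (‖x‖ * ‖y‖) ≤ 0 := div_nonpos_iff.mpr (Or.inr ⟨h', hxy.le⟩)
    linarith
  · intro h
    exact div_pos h hxy

lemma ortho_L (u v : ℂ) (p q U V : ℝ) (hq : q ≠ 0)
    (hp : p = u.re*v.re + u.im*v.im) (hqe : q = u.re*v.im - u.im*v.re)
    (hU : U = u.re^2 + u.im^2) (hV : V = v.re^2 + v.im^2) :
    (((p/q : ℝ):ℂ) * I * (u-v) - u) * (((p/q : ℝ):ℂ) * I * (u-v) - v)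
      = (((U-p)*(V-p)/q^2 : ℝ):ℂ) * (u*v)
    ∧ (((p/q : ℝ):ℂ) * I * (u-v)) * (((p/q : ℝ):ℂ) * I * (u-v) - v)
      = ((p*(V-p)/q^2 : ℝ):ℂ) * (u*(u-v))
    ∧ (((p/q : ℝ):ℂ) * I * (u-v)) * (((p/q : ℝ):ℂ) * I * (u-v) - u)
      = ((p*(U-p)/q^2 : ℝ):ℂ) * (v*(v-u)) := by
  subst hp hqe hU hV
  have hq' : u.re * v.im - v.re * u.im ≠ 0 := by rw [mul_comm v.re]; exact hq
  refine ⟨?_, ?_, ?_⟩ <;>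
  · apply Complex.ext <;>
    · simp only [Complex.mul_re, Complex.mul_im, Complex.sub_re, Complex.sub_im,
        Complex.add_re, Complex.add_im, Complex.ofReal_re, Complex.ofReal_im,
        Complex.I_re, Complex.I_im]
      field_simp
      ring

lemma unique_pt (u v δ : ℂ) (c : ℝ)
    (hq : (conj' u * v).im ≠ 0)
    (hc : c * (conj' u * v).im = (conj' u * v).re)
    (h1 : (conj' (δ + (c:ℂ)*I*(u-v)) * (u-v)).re = 0)
    (h2 : (conj' (δ + (c:ℂ)*I*(u-v) - u) * v).re = 0) : δ = 0 := by
  simp only [Complex.mul_re, Complex.mul_im, Complex.conj_re, Complex.conj_im, Complex.add_re,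
    Complex.add_im, Complex.sub_re, Complex.sub_im, Complex.ofReal_re, Complex.ofReal_im,
    Complex.I_re, Complex.I_im] at h1 h2 hc hq
  have hq' : u.re * v.im - u.im * v.re ≠ 0 := by
    intro h
    apply hq
    linarith
  have h3 : δ.re * (u.re * v.im - u.im * v.re) = 0 := by
    linear_combination v.im * h1 - (u.im - v.im) * h2 + (u.im - v.im) * hc
  have h4 : δ.im * (u.re * v.im - u.im * v.re) = 0 := by
    linear_combination (u.re - v.re) * h2 - v.re * h1 - (u.re - v.re) * hc
  exact Complex.ext ((mul_eq_zero.mp h3).resolve_right hq')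
    ((mul_eq_zero.mp h4).resolve_right hq')


open InnerProductGeometry

/-- Three distinct non-collinear points in `ℂ` fail to be `2`-polynomially convex iff the
triangle they span is acute; in that case the unique extra hull point is the
orthocenter. -/
theorem stmt_11 (z₀ z₁ z₂ : ℂ) (h01 : z₀ ≠ z₁) (h02 : z₀ ≠ z₂) (h12 : z₁ ≠ z₂)
    (hnc : ¬ Collinear ℝ ({z₀, z₁, z₂} : Set ℂ)) :
    ((∃ w : ℂ, w ∉ ({z₀, z₁, z₂} : Set ℂ) ∧
        ∀ P : Polynomial ℂ, P.natDegree ≤ 2 →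
          ‖P.eval w‖ ≤ max ‖P.eval z₀‖ (max ‖P.eval z₁‖ ‖P.eval z₂‖)) ↔
      (angle (z₁ - z₀) (z₂ - z₀) < Real.pi / 2 ∧
       angle (z₀ - z₁) (z₂ - z₁) < Real.pi / 2 ∧
       angle (z₀ - z₂) (z₁ - z₂) < Real.pi / 2)) ∧
    ∀ w : ℂ, w ∉ ({z₀, z₁, z₂} : Set ℂ) →
      (∀ P : Polynomial ℂ, P.natDegree ≤ 2 →
          ‖P.eval w‖ ≤ max ‖P.eval z₀‖ (max ‖P.eval z₁‖ ‖P.eval z₂‖)) →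
      (inner (𝕜 := ℝ) (z₀ - w) (z₁ - z₂) = (0 : ℝ) ∧
       inner (𝕜 := ℝ) (z₁ - w) (z₂ - z₀) = (0 : ℝ)) := by
  obtain ⟨u, hu_def⟩ : ∃ u : ℂ, u = z₁ - z₀ := ⟨_, rfl⟩
  obtain ⟨v, hv_def⟩ : ∃ v : ℂ, v = z₂ - z₀ := ⟨_, rfl⟩
  obtain ⟨p, hp_def⟩ : ∃ p : ℝ, p = (conj' u * v).re := ⟨_, rfl⟩
  obtain ⟨q, hq_def⟩ : ∃ q : ℝ, q = (conj' u * v).im := ⟨_, rfl⟩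
  obtain ⟨U, hU_def⟩ : ∃ U : ℝ, U = Complex.normSq u := ⟨_, rfl⟩
  obtain ⟨V, hV_def⟩ : ∃ V : ℝ, V = Complex.normSq v := ⟨_, rfl⟩
  have hu : u ≠ 0 := by rw [hu_def]; exact sub_ne_zero.mpr h01.symm
  have hv : v ≠ 0 := by rw [hv_def]; exact sub_ne_zero.mpr h02.symm
  have huv : u - v ≠ 0 := by rw [hu_def, hv_def]; intro h; exact h12 (by linear_combination h)
  have hUpos : 0 < U := by rw [hU_def]; exact Complex.normSq_pos.mpr hu
  have hVpos : 0 < V := by rw [hV_def]; exact Complex.normSq_pos.mpr hv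
  -- q ≠ 0 from non-collinearity
  have hq : q ≠ 0 := by
    intro h0
    apply hnc
    have hmem : z₀ ∈ ({z₀, z₁, z₂} : Set ℂ) := by simp
    rw [collinear_iff_of_mem hmem]
    refine ⟨u, ?_⟩
    intro pt hpt
    have hcv : conj' u * v = (p : ℂ) := by
      apply Complex.ext
      · simp [hp_def]
      · simp [← hq_def, h0]
    have hUv : (U : ℂ) * v = (p : ℂ) * u := by
      calc (U:ℂ) * v = (u * conj' u) * v := by rw [hU_def, Complex.mul_conj]
        _ = u * (conj' u * v) := by ring
        _ = u * (p:ℂ) := by rw [hcv]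
        _ = (p:ℂ) * u := by ring
    rcases hpt with h | h | h
    · exact ⟨0, by simp [h]⟩
    · refine ⟨1, ?_⟩
      rw [h, vadd_eq_add, one_smul, hu_def]; ring
    · refine ⟨p/U, ?_⟩
      rw [h, vadd_eq_add, Complex.real_smul]
      have hvpu : v = ((p/U : ℝ):ℂ) * u := by
        push_cast
        rw [div_mul_eq_mul_div, eq_div_iff (Complex.ofReal_ne_zero.mpr hUpos.ne')]
        linear_combination hUv
      rw [← hvpu, hv_def]; ring
  -- angle characterizations
  have hne10 : z₁ - z₀ ≠ 0 := sub_ne_zero.mpr h01.symm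
  have hne20 : z₂ - z₀ ≠ 0 := sub_ne_zero.mpr h02.symm
  have hne01 : z₀ - z₁ ≠ 0 := sub_ne_zero.mpr h01
  have hne21 : z₂ - z₁ ≠ 0 := sub_ne_zero.mpr h12.symm
  have hne02 : z₀ - z₂ ≠ 0 := sub_ne_zero.mpr h02
  have hne12 : z₁ - z₂ ≠ 0 := sub_ne_zero.mpr h12
  have hang0 : (InnerProductGeometry.angle (z₁ - z₀) (z₂ - z₀) < Real.pi / 2) ↔ 0 < p := by
    rw [angle_lt_iff hne10 hne20, ← hu_def, ← hv_def, ← hp_def]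
  have hang1 : (InnerProductGeometry.angle (z₀ - z₁) (z₂ - z₁) < Real.pi / 2) ↔ 0 < U - p := by
    rw [angle_lt_iff hne01 hne21]
    have e : conj' (z₀ - z₁) * (z₂ - z₁) = ((U:ℝ):ℂ) - conj' u * v := by
      rw [hU_def, Complex.normSq_eq_conj_mul_self, hu_def, hv_def]
      simp only [map_sub]
      ring
    rw [e]
    simp only [Complex.sub_re, Complex.ofReal_re]
    rw [← hp_def]
  have hang2 : (InnerProductGeometry.angle (z₀ - z₂) (z₁ - z₂) < Real.pi / 2) ↔ 0 < V - p := by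
    rw [angle_lt_iff hne02 hne12]
    have e : conj' (z₀ - z₂) * (z₁ - z₂) = ((V:ℝ):ℂ) - conj' v * u := by
      rw [hV_def, Complex.normSq_eq_conj_mul_self, hu_def, hv_def]
      simp only [map_sub]
      ring
    have e2 : conj' v * u = conj' (conj' u * v) := by
      rw [map_mul, Complex.conj_conj]
      ring
    rw [e, e2]
    simp only [Complex.sub_re, Complex.ofReal_re, Complex.conj_re]
    rw [← hp_def]
  -- the Lagrange value formulas at the orthocenter
  obtain ⟨F0, F1, F2⟩ := ortho_L u v p q U V hq
    (by rw [hp_def]; simp [Complex.mul_re, Complex.conj_re, Complex.conj_im]; try ring)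
    (by rw [hq_def]; simp [Complex.mul_im, Complex.conj_re, Complex.conj_im]; try ring)
    (by rw [hU_def, Complex.normSq_apply]; try ring)
    (by rw [hV_def, Complex.normSq_apply]; try ring)
  have hvu : v - u ≠ 0 := fun h => huv (by linear_combination -h)
  have hq2 : (0:ℝ) < q^2 := by positivity
  -- part 2 : any hull point is the orthocenter
  have part2 : ∀ w : ℂ, w ∉ ({z₀, z₁, z₂} : Set ℂ) →
      (∀ P : Polynomial ℂ, P.natDegree ≤ 2 →
          ‖P.eval w‖ ≤ max ‖P.eval z₀‖ (max ‖P.eval z₁‖ ‖P.eval z₂‖)) →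
      (inner (𝕜 := ℝ) (z₀ - w) (z₁ - z₂) = (0 : ℝ) ∧
       inner (𝕜 := ℝ) (z₁ - w) (z₂ - z₀) = (0 : ℝ)) := by
    intro w hwK hH
    simp only [Set.mem_insert_iff, Set.mem_singleton_iff, not_or] at hwK
    obtain ⟨hw0, hw1, hw2⟩ := hwK
    obtain ⟨⟨r₀, hr₀, e₀⟩, ⟨r₁, hr₁, e₁⟩, ⟨r₂, hr₂, e₂⟩⟩ :=
      (hull_char z₀ z₁ z₂ w h01 h02 h12 hw0 hw1 hw2).mp hH
    have hD₀ : (z₀-z₁)*(z₀-z₂) ≠ 0 := mul_ne_zero hne01 hne02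
    have hD₁ : (z₁-z₀)*(z₁-z₂) ≠ 0 := mul_ne_zero hne10 hne12
    have key1 : (w - z₀)^2 * (r₀:ℂ) = -((r₁:ℂ)*(r₂:ℂ)) * (z₁-z₂)^2 :=
      mul_right_cancel₀ hD₀ (by
        linear_combination (-(w-z₀)^2) * e₀ + ((w-z₀)*(w-z₂)) * e₂
          + ((r₂:ℂ) * ((z₂-z₀)*(z₂-z₁))) * e₁)
    have key2 : (w - z₁)^2 * (r₁:ℂ) = -((r₀:ℂ)*(r₂:ℂ)) * (z₂-z₀)^2 :=
      mul_right_cancel₀ hD₁ (by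
        linear_combination (-(w-z₁)^2) * e₁ + ((w-z₁)*(w-z₂)) * e₂
          + ((r₂:ℂ) * ((z₂-z₀)*(z₂-z₁))) * e₀)
    constructor
    · -- first orthogonality
      have hd : (z₁-z₂) * conj' (z₁-z₂) = ((Complex.normSq (z₁-z₂) : ℝ):ℂ) := Complex.mul_conj _
      have hs1 : ((w-z₀) * conj' (z₁-z₂) * (r₀:ℂ))^2
          = ((-(r₀*r₁*r₂*(Complex.normSq (z₁-z₂))^2) : ℝ):ℂ) := by
        push_cast
        linear_combination ((conj' (z₁-z₂))^2 * (r₀:ℂ)) * key1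
          - ((r₁:ℂ)*(r₂:ℂ)*(r₀:ℂ)) * ((z₁-z₂)*conj' (z₁-z₂)
            + ((Complex.normSq (z₁-z₂) : ℝ):ℂ)) * hd
      have hm1 : -(r₀*r₁*r₂*(Complex.normSq (z₁-z₂))^2) < 0 := by
        have h1 : 0 < Complex.normSq (z₁-z₂) := Complex.normSq_pos.mpr hne12
        have : 0 < r₀*r₁*r₂*(Complex.normSq (z₁-z₂))^2 := by positivity
        linarith
      have hre1 : ((w-z₀) * conj' (z₁-z₂) * (r₀:ℂ)).re = 0 := sq_neg_re_eq_zero hs1 hm1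
      have hre1' : ((w-z₀) * conj' (z₁-z₂)).re = 0 := by
        have h2 : ((w-z₀) * conj' (z₁-z₂) * (r₀:ℂ)).re
            = ((w-z₀) * conj' (z₁-z₂)).re * r₀ := by
          simp [Complex.mul_re, Complex.ofReal_re, Complex.ofReal_im]
        rw [h2] at hre1
        exact (mul_eq_zero.mp hre1).resolve_right hr₀.ne'
      rw [Complex.inner, mul_comm (z₁ - z₂)]
      have hrel : conj' (z₀ - w) * (z₁ - z₂) = -conj' ((w-z₀) * conj' (z₁-z₂)) := by
        rw [map_mul, Complex.conj_conj, show z₀ - w = -(w - z₀) from by ring, map_neg]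
        ring
      rw [hrel]
      rw [Complex.neg_re, Complex.conj_re, hre1', neg_zero]
    · -- second orthogonality
      have hd : (z₂-z₀) * conj' (z₂-z₀) = ((Complex.normSq (z₂-z₀) : ℝ):ℂ) := Complex.mul_conj _
      have hs2 : ((w-z₁) * conj' (z₂-z₀) * (r₁:ℂ))^2
          = ((-(r₁*r₀*r₂*(Complex.normSq (z₂-z₀))^2) : ℝ):ℂ) := by
        push_cast
        linear_combination ((conj' (z₂-z₀))^2 * (r₁:ℂ)) * key2
          - ((r₀:ℂ)*(r₂:ℂ)*(r₁:ℂ)) * ((z₂-z₀)*conj' (z₂-z₀)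
            + ((Complex.normSq (z₂-z₀) : ℝ):ℂ)) * hd
      have hm2 : -(r₁*r₀*r₂*(Complex.normSq (z₂-z₀))^2) < 0 := by
        have h1 : 0 < Complex.normSq (z₂-z₀) := Complex.normSq_pos.mpr hne20
        have : 0 < r₁*r₀*r₂*(Complex.normSq (z₂-z₀))^2 := by positivity
        linarith
      have hre2 : ((w-z₁) * conj' (z₂-z₀) * (r₁:ℂ)).re = 0 := sq_neg_re_eq_zero hs2 hm2
      have hre2' : ((w-z₁) * conj' (z₂-z₀)).re = 0 := by
        have h2 : ((w-z₁) * conj' (z₂-z₀) * (r₁:ℂ)).re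
            = ((w-z₁) * conj' (z₂-z₀)).re * r₁ := by
          simp [Complex.mul_re, Complex.ofReal_re, Complex.ofReal_im]
        rw [h2] at hre2
        exact (mul_eq_zero.mp hre2).resolve_right hr₁.ne'
      rw [Complex.inner, mul_comm (z₂ - z₀)]
      have hrel : conj' (z₁ - w) * (z₂ - z₀) = -conj' ((w-z₁) * conj' (z₂-z₀)) := by
        rw [map_mul, Complex.conj_conj, show z₁ - w = -(w - z₁) from by ring, map_neg]
        ring
      rw [hrel]
      rw [Complex.neg_re, Complex.conj_re, hre2', neg_zero]
  refine ⟨⟨?_, ?_⟩, part2⟩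
  · -- hull point exists → acute
    rintro ⟨w, hwK, hH⟩
    obtain ⟨in1, in2⟩ := part2 w hwK hH
    simp only [Set.mem_insert_iff, Set.mem_singleton_iff, not_or] at hwK
    obtain ⟨hw0, hw1, hw2⟩ := hwK
    obtain ⟨⟨r₀, hr₀, e₀⟩, ⟨r₁, hr₁, e₁⟩, ⟨r₂, hr₂, e₂⟩⟩ :=
      (hull_char z₀ z₁ z₂ w h01 h02 h12 hw0 hw1 hw2).mp hH
    rw [Complex.inner, mul_comm (z₁ - z₂)] at in1
    rw [Complex.inner, mul_comm (z₂ - z₀)] at in2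
    have h1' : (conj' (w - z₀) * (u - v)).re = 0 := by
      have hrel : conj' (w - z₀) * (u - v) = -(conj' (z₀ - w) * (z₁ - z₂)) := by
        rw [hu_def, hv_def, show z₀ - w = -(w - z₀) from by ring, map_neg]
        ring
      rw [hrel, Complex.neg_re, in1, neg_zero]
    have h2' : (conj' (w - z₁) * v).re = 0 := by
      have hrel : conj' (w - z₁) * v = -(conj' (z₁ - w) * (z₂ - z₀)) := by
        rw [hv_def, show z₁ - w = -(w - z₁) from by ring, map_neg]
        ring
      rw [hrel, Complex.neg_re, in2, neg_zero]
    have hδ : w - z₀ - ((p/q : ℝ):ℂ)*I*(u-v) = 0 := by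
      refine unique_pt u v _ (p/q) (by rw [← hq_def]; exact hq) ?_ ?_ ?_
      · rw [← hq_def, ← hp_def]
        exact div_mul_cancel₀ p hq
      · rw [show w - z₀ - ((p/q : ℝ):ℂ)*I*(u-v) + ((p/q : ℝ):ℂ)*I*(u-v) = w - z₀ from by ring]
        exact h1'
      · rw [show w - z₀ - ((p/q : ℝ):ℂ)*I*(u-v) + ((p/q : ℝ):ℂ)*I*(u-v) - u = w - z₁ from by
          rw [hu_def]; ring]
        exact h2'
    have hw_eq : w = z₀ + ((p/q : ℝ):ℂ)*I*(u-v) := by linear_combination hδ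
    have hA : w - z₁ = ((p/q : ℝ):ℂ)*I*(u-v) - u := by rw [hw_eq, hu_def]; ring
    have hB : w - z₂ = ((p/q : ℝ):ℂ)*I*(u-v) - v := by rw [hw_eq, hv_def]; ring
    have hW : w - z₀ = ((p/q : ℝ):ℂ)*I*(u-v) := by rw [hw_eq]; ring
    have hC0 : (z₀-z₁)*(z₀-z₂) = u*v := by rw [hu_def, hv_def]; ring
    have hC1 : (z₁-z₀)*(z₁-z₂) = u*(u-v) := by rw [hu_def, hv_def]; ring
    have hC2 : (z₂-z₀)*(z₂-z₁) = v*(v-u) := by rw [hu_def, hv_def]; ring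
    rw [hA, hB, hC0, F0] at e₀
    rw [hW, hB, hC1, F1] at e₁
    rw [hW, hA, hC2, F2] at e₂
    have hv0 : (U-p)*(V-p)/q^2 = r₀ :=
      Complex.ofReal_inj.mp (mul_right_cancel₀ (mul_ne_zero hu hv) e₀)
    have hv1 : p*(V-p)/q^2 = r₁ :=
      Complex.ofReal_inj.mp (mul_right_cancel₀ (mul_ne_zero hu huv) e₁)
    have hv2 : p*(U-p)/q^2 = r₂ :=
      Complex.ofReal_inj.mp (mul_right_cancel₀ (mul_ne_zero hv hvu) e₂)
    have hP0 : 0 < (U-p)*(V-p) := by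
      have h3 : 0 < (U-p)*(V-p)/q^2 * q^2 := mul_pos (hv0 ▸ hr₀) hq2
      rwa [div_mul_cancel₀ _ hq2.ne'] at h3
    have hP1 : 0 < p*(V-p) := by
      have h3 : 0 < p*(V-p)/q^2 * q^2 := mul_pos (hv1 ▸ hr₁) hq2
      rwa [div_mul_cancel₀ _ hq2.ne'] at h3
    have hP2 : 0 < p*(U-p) := by
      have h3 : 0 < p*(U-p)/q^2 * q^2 := mul_pos (hv2 ▸ hr₂) hq2
      rwa [div_mul_cancel₀ _ hq2.ne'] at h3
    have hp0 : 0 < p := by nlinarith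
    have hUp : 0 < U - p := by nlinarith
    have hVp : 0 < V - p := by nlinarith
    exact ⟨hang0.mpr hp0, hang1.mpr hUp, hang2.mpr hVp⟩
  · -- acute → hull point exists
    rintro ⟨ha0, ha1, ha2⟩
    have hp0 : 0 < p := hang0.mp ha0
    have hUp : 0 < U - p := hang1.mp ha1
    have hVp : 0 < V - p := hang2.mp ha2
    have hR0 : 0 < (U-p)*(V-p)/q^2 := div_pos (mul_pos hUp hVp) hq2
    have hR1 : 0 < p*(V-p)/q^2 := div_pos (mul_pos hp0 hVp) hq2
    have hR2 : 0 < p*(U-p)/q^2 := div_pos (mul_pos hp0 hUp) hq2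
    obtain ⟨w, hw_def⟩ : ∃ w : ℂ, w = z₀ + ((p/q : ℝ):ℂ)*I*(u-v) := ⟨_, rfl⟩
    have hA : w - z₁ = ((p/q : ℝ):ℂ)*I*(u-v) - u := by rw [hw_def, hu_def]; ring
    have hB : w - z₂ = ((p/q : ℝ):ℂ)*I*(u-v) - v := by rw [hw_def, hv_def]; ring
    have hW : w - z₀ = ((p/q : ℝ):ℂ)*I*(u-v) := by rw [hw_def]; ring
    have hC0 : (z₀-z₁)*(z₀-z₂) = u*v := by rw [hu_def, hv_def]; ring
    have hC1 : (z₁-z₀)*(z₁-z₂) = u*(u-v) := by rw [hu_def, hv_def]; ring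
    have hC2 : (z₂-z₀)*(z₂-z₁) = v*(v-u) := by rw [hu_def, hv_def]; ring
    have hw0 : w ≠ z₀ := by
      intro h
      have hX : ((p/q : ℝ):ℂ)*I*(u-v) ≠ 0 :=
        mul_ne_zero (mul_ne_zero (Complex.ofReal_ne_zero.mpr
          (div_ne_zero hp0.ne' hq)) Complex.I_ne_zero) huv
      exact hX (by rw [← hW, h, sub_self])
    have hw1 : w ≠ z₁ := by
      intro h
      have h0 : ((p/q : ℝ):ℂ)*I*(u-v) - u = 0 := by rw [← hA, h, sub_self]
      have hF := F0
      rw [h0, zero_mul] at hF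
      exact (mul_ne_zero (Complex.ofReal_ne_zero.mpr hR0.ne') (mul_ne_zero hu hv)) hF.symm
    have hw2 : w ≠ z₂ := by
      intro h
      have h0 : ((p/q : ℝ):ℂ)*I*(u-v) - v = 0 := by rw [← hB, h, sub_self]
      have hF := F0
      rw [h0, mul_zero] at hF
      exact (mul_ne_zero (Complex.ofReal_ne_zero.mpr hR0.ne') (mul_ne_zero hu hv)) hF.symm
    refine ⟨w, ?_, ?_⟩
    · simp only [Set.mem_insert_iff, Set.mem_singleton_iff, not_or]
      exact ⟨hw0, hw1, hw2⟩
    · rw [hull_char z₀ z₁ z₂ w h01 h02 h12 hw0 hw1 hw2]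
      refine ⟨⟨(U-p)*(V-p)/q^2, hR0, ?_⟩, ⟨p*(V-p)/q^2, hR1, ?_⟩, ⟨p*(U-p)/q^2, hR2, ?_⟩⟩
      · rw [hA, hB, hC0]; exact F0
      · rw [hW, hB, hC1]; exact F1
      · rw [hW, hA, hC2]; exact F2
end

section
/- If w is the orthocenter of an acute triangle with vertices z₀, z₁, z₂ ∈ ℂ, then the three complex numbers (z_i − w)·∏_{j≠i}(z_i − z_j), i = 0,1,2, all lie on the same real half-line from the origin. -/
open InnerProductGeometry Complex

lemma inner_pos_of_angle_lt_pi_div_two' (x y : ℂ) (hx : x ≠ 0) (hy : y ≠ 0)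
    (h : angle x y < Real.pi / 2) : 0 < (inner (𝕜 := ℝ) x y : ℝ) := by
  have hcos : 0 < Real.cos (angle x y) := by
    apply Real.cos_pos_of_mem_Ioo
    constructor
    · linarith [angle_nonneg x y, Real.pi_pos]
    · exact h
  have hxn : 0 < ‖x‖ := norm_pos_iff.2 hx
  have hyn : 0 < ‖y‖ := norm_pos_iff.2 hy
  have hc := cos_angle_mul_norm_mul_norm x y
  rw [← hc]
  positivity

lemma perp_decomp (x a : ℂ) (ha : a ≠ 0) (h : (inner (𝕜 := ℝ) x a : ℝ) = 0) :
    x = ((((x * (starRingEnd ℂ) a).im / Complex.normSq a : ℝ)) : ℂ) * Complex.I * a := by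
  have hre : (x * (starRingEnd ℂ) a).re = 0 := by
    rw [Complex.inner] at h
    simp only [Complex.mul_re, Complex.conj_re, Complex.conj_im] at h ⊢
    linarith
  have hq : x * (starRingEnd ℂ) a = ((x * (starRingEnd ℂ) a).im : ℂ) * Complex.I := by
    apply Complex.ext <;> simp [hre]
  have hna : (Complex.normSq a : ℂ) ≠ 0 := by
    exact_mod_cast Complex.normSq_pos.2 ha |>.ne'
  have h3 : (starRingEnd ℂ) a * a = (Complex.normSq a : ℂ) := by
    rw [mul_comm, Complex.mul_conj]
  have h2 : x * (Complex.normSq a : ℂ) = ((x * (starRingEnd ℂ) a).im : ℂ) * Complex.I * a := by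
    calc x * (Complex.normSq a : ℂ) = x * (starRingEnd ℂ) a * a := by rw [mul_assoc, h3]
    _ = _ := congrArg (· * a) hq
  rw [Complex.ofReal_div, div_mul_eq_mul_div, div_mul_eq_mul_div, eq_div_iff hna]
  linear_combination h2
/-- If `w` is the orthocenter of an acute triangle `z₀ z₁ z₂` in `ℂ`, then the values
`(z_i − w) ∏_{j ≠ i}(z_i − z_j)` all lie on the same real half-line from the origin. -/
theorem stmt_12 (z₀ z₁ z₂ w : ℂ) (h01 : z₀ ≠ z₁) (h02 : z₀ ≠ z₂) (h12 : z₁ ≠ z₂)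
    (hnc : ¬ Collinear ℝ ({z₀, z₁, z₂} : Set ℂ))
    (hacute : angle (z₁ - z₀) (z₂ - z₀) < Real.pi / 2 ∧
              angle (z₀ - z₁) (z₂ - z₁) < Real.pi / 2 ∧
              angle (z₀ - z₂) (z₁ - z₂) < Real.pi / 2)
    (horth₁ : inner (𝕜 := ℝ) (z₀ - w) (z₁ - z₂) = (0 : ℝ))
    (horth₂ : inner (𝕜 := ℝ) (z₁ - w) (z₂ - z₀) = (0 : ℝ)) :
    ∃ u : ℂ, ‖u‖ = 1 ∧ ∃ r₀ r₁ r₂ : ℝ, 0 < r₀ ∧ 0 < r₁ ∧ 0 < r₂ ∧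
      (z₀ - w) * ((z₀ - z₁) * (z₀ - z₂)) = (r₀ : ℂ) * u ∧
      (z₁ - w) * ((z₁ - z₀) * (z₁ - z₂)) = (r₁ : ℂ) * u ∧
      (z₂ - w) * ((z₂ - z₀) * (z₂ - z₁)) = (r₂ : ℂ) * u := by
  obtain ⟨hang₀, hang₁, hang₂⟩ := hacute
  have h10 : z₁ - z₀ ≠ 0 := sub_ne_zero.2 (Ne.symm h01)
  have h20 : z₂ - z₀ ≠ 0 := sub_ne_zero.2 (Ne.symm h02)
  have h01' : z₀ - z₁ ≠ 0 := sub_ne_zero.2 h01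
  have h21 : z₂ - z₁ ≠ 0 := sub_ne_zero.2 (Ne.symm h12)
  have h02' : z₀ - z₂ ≠ 0 := sub_ne_zero.2 h02
  have h12' : z₁ - z₂ ≠ 0 := sub_ne_zero.2 h12
  -- positive inner products from acuteness
  have hP₀ : 0 < ((starRingEnd ℂ) (z₁ - z₀) * (z₂ - z₀)).re := by
    have := inner_pos_of_angle_lt_pi_div_two' _ _ h10 h20 hang₀
    rwa [Complex.inner, mul_comm] at this
  have hP₁ : 0 < ((starRingEnd ℂ) (z₀ - z₁) * (z₂ - z₁)).re := by
    have := inner_pos_of_angle_lt_pi_div_two' _ _ h01' h21 hang₁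
    rwa [Complex.inner, mul_comm] at this
  have hP₂ : 0 < ((starRingEnd ℂ) (z₀ - z₂) * (z₁ - z₂)).re := by
    have := inner_pos_of_angle_lt_pi_div_two' _ _ h02' h12' hang₂
    rwa [Complex.inner, mul_comm] at this
  -- third orthogonality
  have horth₃ : inner (𝕜 := ℝ) (z₂ - w) (z₀ - z₁) = (0 : ℝ) := by
    rw [Complex.inner] at horth₁ horth₂ ⊢
    simp only [map_sub, Complex.sub_re, Complex.sub_im, Complex.mul_re, Complex.mul_im,
      Complex.conj_re, Complex.conj_im] at horth₁ horth₂ ⊢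
    linarith
  -- altitude decompositions
  set t₀ : ℝ := ((z₀ - w) * (starRingEnd ℂ) (z₁ - z₂)).im / Complex.normSq (z₁ - z₂) with ht₀_def
  set t₁ : ℝ := ((z₁ - w) * (starRingEnd ℂ) (z₂ - z₀)).im / Complex.normSq (z₂ - z₀) with ht₁_def
  set t₂ : ℝ := ((z₂ - w) * (starRingEnd ℂ) (z₀ - z₁)).im / Complex.normSq (z₀ - z₁) with ht₂_def
  have hw0 : z₀ - w = (t₀ : ℂ) * Complex.I * (z₁ - z₂) := perp_decomp _ _ h12' horth₁
  have hw1 : z₁ - w = (t₁ : ℂ) * Complex.I * (z₂ - z₀) := perp_decomp _ _ h20 horth₂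
  have hw2 : z₂ - w = (t₂ : ℂ) * Complex.I * (z₀ - z₁) := perp_decomp _ _ h01' horth₃
  clear ht₀_def ht₁_def ht₂_def
  clear_value t₀ t₁ t₂
  set D : ℝ := ((z₁ - z₂) * (starRingEnd ℂ) (z₂ - z₀)).im with hD_def
  -- side decompositions
  have hs₀ : z₁ - z₀ = (t₁ : ℂ) * Complex.I * (z₂ - z₀) - (t₀ : ℂ) * Complex.I * (z₁ - z₂) := by
    linear_combination hw1 - hw0
  have hs₁ : z₂ - z₁ = (t₂ : ℂ) * Complex.I * (z₀ - z₁) - (t₁ : ℂ) * Complex.I * (z₂ - z₀) := by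
    linear_combination hw2 - hw1
  have hs₂ : z₁ - z₂ = (t₁ : ℂ) * Complex.I * (z₂ - z₀) - (t₂ : ℂ) * Complex.I * (z₀ - z₁) := by
    linear_combination hw1 - hw2
  -- key sign identities
  have hE₀ : ((starRingEnd ℂ) (z₁ - z₀) * (z₂ - z₀)).re = t₀ * D := by
    conv_lhs => rw [hs₀]
    simp only [hD_def, map_sub, map_mul, Complex.conj_I, Complex.conj_ofReal,
      Complex.mul_re, Complex.mul_im, Complex.sub_re, Complex.sub_im,
      Complex.conj_re, Complex.conj_im, Complex.I_re, Complex.I_im,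
      Complex.ofReal_re, Complex.ofReal_im, Complex.neg_re, Complex.neg_im]
    ring
  have hE₁ : ((starRingEnd ℂ) (z₀ - z₁) * (z₂ - z₁)).re = t₁ * D := by
    conv_lhs => rw [hs₁]
    simp only [hD_def, map_sub, map_mul, Complex.conj_I, Complex.conj_ofReal,
      Complex.mul_re, Complex.mul_im, Complex.sub_re, Complex.sub_im,
      Complex.conj_re, Complex.conj_im, Complex.I_re, Complex.I_im,
      Complex.ofReal_re, Complex.ofReal_im, Complex.neg_re, Complex.neg_im]
    ring
  have hE₂ : ((starRingEnd ℂ) (z₀ - z₂) * (z₁ - z₂)).re = t₂ * D := by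
    conv_lhs => rw [hs₂]
    simp only [hD_def, map_sub, map_mul, Complex.conj_I, Complex.conj_ofReal,
      Complex.mul_re, Complex.mul_im, Complex.sub_re, Complex.sub_im,
      Complex.conj_re, Complex.conj_im, Complex.I_re, Complex.I_im,
      Complex.ofReal_re, Complex.ofReal_im, Complex.neg_re, Complex.neg_im]
    ring
  have hT₀ : 0 < t₀ * D := hE₀ ▸ hP₀
  have hT₁ : 0 < t₁ * D := hE₁ ▸ hP₁
  have hT₂ : 0 < t₂ * D := hE₂ ▸ hP₂
  have hDne : D ≠ 0 := by
    intro h; rw [h, mul_zero] at hT₀; exact lt_irrefl _ hT₀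
  set V : ℂ := -(Complex.I * ((z₁ - z₂) * ((z₂ - z₀) * (z₀ - z₁)))) with hV_def
  have hVne : V ≠ 0 := by
    simp only [hV_def, neg_ne_zero]
    exact mul_ne_zero Complex.I_ne_zero (mul_ne_zero h12' (mul_ne_zero h20 h01'))
  have hVnorm : 0 < ‖V‖ := norm_pos_iff.2 hVne
  have hA0 : (z₀ - w) * ((z₀ - z₁) * (z₀ - z₂)) = (t₀ : ℂ) * V := by
    rw [hw0, hV_def]; ring
  have hA1 : (z₁ - w) * ((z₁ - z₀) * (z₁ - z₂)) = (t₁ : ℂ) * V := by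
    rw [hw1, hV_def]; ring
  have hA2 : (z₂ - w) * ((z₂ - z₀) * (z₂ - z₁)) = (t₂ : ℂ) * V := by
    rw [hw2, hV_def]; ring
  have haV : ‖V‖ ≠ 0 := norm_ne_zero_iff.2 hVne
  clear hD_def hV_def hs₀ hs₁ hs₂ hE₀ hE₁ hE₂ hw0 hw1 hw2
  clear_value D V
  refine ⟨((D / |D| : ℝ) : ℂ) * ((‖V‖⁻¹ : ℝ) : ℂ) * V, ?_, t₀ * D * ‖V‖ / |D|,
    t₁ * D * ‖V‖ / |D|, t₂ * D * ‖V‖ / |D|, ?_, ?_, ?_, ?_, ?_, ?_⟩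
  · have h1 : _root_.abs (D / _root_.abs D) = 1 := by
      have h2 : _root_.abs (_root_.abs D) = _root_.abs D := abs_abs D
      rw [abs_div, h2, div_self (abs_ne_zero.2 hDne)]
    rw [norm_mul, norm_mul, Complex.norm_real, Complex.norm_real, Real.norm_eq_abs,
      Real.norm_eq_abs, h1, abs_inv, abs_of_pos hVnorm, one_mul,
      inv_mul_cancel₀ hVnorm.ne']
  · exact div_pos (mul_pos hT₀ hVnorm) (abs_pos.2 hDne)
  · exact div_pos (mul_pos hT₁ hVnorm) (abs_pos.2 hDne)
  · exact div_pos (mul_pos hT₂ hVnorm) (abs_pos.2 hDne)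
  · rw [hA0]
    have hr : t₀ * D * ‖V‖ / |D| * (D / |D|) * ‖V‖⁻¹ = t₀ := by
      field_simp [haV]
      rw [sq_abs]
    calc (t₀ : ℂ) * V = ((t₀ * D * ‖V‖ / |D| * (D / |D|) * ‖V‖⁻¹ : ℝ) : ℂ) * V := by rw [hr]
    _ = _ := by push_cast; ring
  · rw [hA1]
    have hr : t₁ * D * ‖V‖ / |D| * (D / |D|) * ‖V‖⁻¹ = t₁ := by
      field_simp [haV]
      rw [sq_abs]
    calc (t₁ : ℂ) * V = ((t₁ * D * ‖V‖ / |D| * (D / |D|) * ‖V‖⁻¹ : ℝ) : ℂ) * V := by rw [hr]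
    _ = _ := by push_cast; ring
  · rw [hA2]
    have hr : t₂ * D * ‖V‖ / |D| * (D / |D|) * ‖V‖⁻¹ = t₂ := by
      field_simp [haV]
      rw [sq_abs]
    calc (t₂ : ℂ) * V = ((t₂ * D * ‖V‖ / |D| * (D / |D|) * ‖V‖⁻¹ : ℝ) : ℂ) * V := by rw [hr]
    _ = _ := by push_cast; ring
end

section
/- Let A ⊆ {z ∈ ℂ : |z| = 1} be a compact set containing the n+1 equally spaced points {e^{2πik/(n+1)} : k = 0,…,n}. Then the Chebyshev property holds: for every monic polynomial p of degree n, sup_{z ∈ A} |p(z)| ≥ 1 = sup_{z ∈ A} |z^n|, so z^n minimizes the sup norm on A among monic polynomials of degree n. -/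
/-- If `A` is a compact subset of the unit circle containing the `(n+1)`-st roots of
unity, then every monic polynomial of degree `n` has sup norm at least `1` on `A`;
thus `z^n` (whose modulus is identically `1` on `A`) is a Chebyshev polynomial of `A`. -/
theorem stmt_16 (n : ℕ) (A : Set ℂ) (hA : IsCompact A)
    (hcirc : A ⊆ {z : ℂ | ‖z‖ = 1}) (hroots : {z : ℂ | z ^ (n + 1) = 1} ⊆ A)
    (p : Polynomial ℂ) (hmonic : p.Monic) (hdeg : p.natDegree = n) :
    ∃ z ∈ A, 1 ≤ ‖p.eval z‖ := by
  obtain ⟨ζ, hζ⟩ : ∃ ζ : ℂ, IsPrimitiveRoot ζ (n + 1) :=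
    ⟨_, Complex.isPrimitiveRoot_exp (n + 1) (Nat.succ_ne_zero n)⟩
  have hζ1 : ζ ^ (n + 1) = 1 := hζ.pow_eq_one
  have hnormζ : ‖ζ‖ = 1 := Complex.norm_eq_one_of_pow_eq_one hζ1 (Nat.succ_ne_zero n)
  have heval : ∀ x : ℂ, p.eval x = ∑ j ∈ Finset.range (n + 1), p.coeff j * x ^ j :=
    fun x => Polynomial.eval_eq_sum_range' (by rw [hdeg]; omega) x
  have key : ∑ k ∈ Finset.range (n + 1), ζ ^ k * p.eval (ζ ^ k) = (n + 1 : ℂ) := by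
    calc ∑ k ∈ Finset.range (n + 1), ζ ^ k * p.eval (ζ ^ k)
        = ∑ k ∈ Finset.range (n + 1), ∑ j ∈ Finset.range (n + 1),
            p.coeff j * (ζ ^ (j + 1)) ^ k := by
          refine Finset.sum_congr rfl fun k _ => ?_
          rw [heval, Finset.mul_sum]
          refine Finset.sum_congr rfl fun j _ => ?_
          have hpw : (ζ ^ (j + 1)) ^ k = (ζ ^ k) ^ j * ζ ^ k := by
            rw [← pow_mul, ← pow_mul, ← pow_add]; congr 1; ring
          rw [hpw]; ring
      _ = ∑ j ∈ Finset.range (n + 1), p.coeff j *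
            ∑ k ∈ Finset.range (n + 1), (ζ ^ (j + 1)) ^ k := by
          rw [Finset.sum_comm]; simp_rw [Finset.mul_sum]
      _ = (n + 1 : ℂ) := by
          rw [Finset.sum_eq_single n]
          · have hcn : p.coeff n = 1 := by rw [← hdeg]; exact hmonic.coeff_natDegree
            rw [hcn, hζ1]
            simp
          · intro j hj hjn
            have hj' : j < n := by have := Finset.mem_range.mp hj; omega
            have hne : ζ ^ (j + 1) ≠ 1 := hζ.pow_ne_one_of_pos_of_lt (by omega) (by omega)
            rw [geom_sum_eq hne, ← pow_mul]
            have h1 : ζ ^ ((j + 1) * (n + 1)) = 1 := by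
              rw [mul_comm, pow_mul, hζ1, one_pow]
            rw [h1]
            simp
          · intro h; simp at h
  have hbound : (n : ℝ) + 1 ≤ ∑ k ∈ Finset.range (n + 1), ‖p.eval (ζ ^ k)‖ := by
    calc (n : ℝ) + 1 = ‖((n : ℂ) + 1)‖ := by
          rw [show ((n : ℂ) + 1) = ((n + 1 : ℕ) : ℂ) by push_cast; ring,
            Complex.norm_natCast]
          push_cast; ring
      _ = ‖∑ k ∈ Finset.range (n + 1), ζ ^ k * p.eval (ζ ^ k)‖ := by rw [key]
      _ ≤ ∑ k ∈ Finset.range (n + 1), ‖ζ ^ k * p.eval (ζ ^ k)‖ := norm_sum_le _ _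
      _ = ∑ k ∈ Finset.range (n + 1), ‖p.eval (ζ ^ k)‖ := by
          refine Finset.sum_congr rfl fun k _ => ?_
          rw [norm_mul, norm_pow, hnormζ, one_pow, one_mul]
  obtain ⟨k, hk, hk1⟩ : ∃ k ∈ Finset.range (n + 1), (1 : ℝ) ≤ ‖p.eval (ζ ^ k)‖ := by
    by_contra h
    push_neg at h
    have hlt : ∑ k ∈ Finset.range (n + 1), ‖p.eval (ζ ^ k)‖ <
        ∑ _k ∈ Finset.range (n + 1), (1 : ℝ) :=
      Finset.sum_lt_sum_of_nonempty ⟨0, Finset.mem_range.mpr (by omega)⟩ h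
    rw [Finset.sum_const, Finset.card_range, nsmul_eq_mul, mul_one] at hlt
    push_cast at hlt
    linarith
  refine ⟨ζ ^ k, hroots ?_, hk1⟩
  show (ζ ^ k) ^ (n + 1) = 1
  rw [← pow_mul, mul_comm, pow_mul, hζ1, one_pow]
end

section
/- Let α < π/4 and A = {z ∈ ℂ : |z| = 1, −α ≤ arg z ≤ α}. Then for every φ with |φ| ≤ α and every r ∈ [0,1), there exist a > 0 such that the quadratic polynomial p(z) = z² − 2e^{iφ}z + e^{2iφ}(a² + 1) satisfies max_{z ∈ A} |p(z)| < |p(r e^{iφ})|. Consequently no point of the open angular sector {z : |z| < 1, −α ≤ arg z ≤ α} lies in the 2-polynomial hull of A. -/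
/-- For an arc `A` of the unit circle of half-angle `α < π/4` centered at `1`, every
point `r e^{iφ}` with `0 ≤ r < 1` and `|φ| ≤ α` can be separated from `A` by the
explicit quadratic `p(z) = z² − 2e^{iφ}z + e^{2iφ}(a² + 1)` for `a > 0` large enough. -/
theorem stmt_17 (α : ℝ) (hα : α < Real.pi / 4) (φ : ℝ) (hφ : |φ| ≤ α)
    (r : ℝ) (hr0 : 0 ≤ r) (hr1 : r < 1) :
    ∃ a : ℝ, 0 < a ∧
      ∀ z : ℂ, ‖z‖ = 1 → -α ≤ z.arg → z.arg ≤ α →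
        ‖z ^ 2 - 2 * Complex.exp (φ * Complex.I) * z
            + Complex.exp (2 * φ * Complex.I) * ((a : ℂ) ^ 2 + 1)‖ <
        ‖((r : ℂ) * Complex.exp (φ * Complex.I)) ^ 2
            - 2 * Complex.exp (φ * Complex.I) * ((r : ℂ) * Complex.exp (φ * Complex.I))
            + Complex.exp (2 * φ * Complex.I) * ((a : ℂ) ^ 2 + 1)‖ := by
  have hr1' : 0 < 1 - r := by linarith
  have hαpos : 0 ≤ α := le_trans (abs_nonneg φ) hφ
  refine ⟨2 / (1 - r), by positivity, ?_⟩
  intro z hz hz1 hz2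
  set a : ℝ := 2 / (1 - r) with ha
  have ha0 : 0 < a := by positivity
  have har : a * (1 - r) = 2 := div_mul_cancel₀ 2 hr1'.ne'
  set θ := z.arg with hθ
  have hzeq : z = Complex.exp (θ * Complex.I) := by
    have h1 : ‖z‖ = 1 := hz
    have := Complex.norm_mul_exp_arg_mul_I z
    rw [h1] at this
    simpa using this.symm
  have hene : Complex.exp ((φ:ℂ) * Complex.I) ≠ 0 := Complex.exp_ne_zero _
  have h2e : Complex.exp (2 * (φ:ℂ) * Complex.I) = Complex.exp ((φ:ℂ) * Complex.I) ^ 2 := by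
    rw [← Complex.exp_nat_mul]; norm_num; ring_nf
  have key : ∀ w : ℂ, w ^ 2 - 2 * Complex.exp (φ * Complex.I) * w
      + Complex.exp (2 * φ * Complex.I) * ((a:ℂ) ^ 2 + 1)
      = Complex.exp ((φ:ℂ) * Complex.I) ^ 2 *
        ((w * (Complex.exp ((φ:ℂ) * Complex.I))⁻¹ - 1) ^ 2 + (a:ℂ) ^ 2) := by
    intro w
    rw [h2e]
    field_simp
    ring
  rw [key z, key _, norm_mul, norm_mul]
  have he1 : ‖Complex.exp ((φ:ℂ) * Complex.I) ^ 2‖ = 1 := by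
    rw [norm_pow, Complex.norm_exp_ofReal_mul_I, one_pow]
  rw [he1, one_mul, one_mul]
  have hR : ((r:ℂ) * Complex.exp ((φ:ℂ) * Complex.I)) * (Complex.exp ((φ:ℂ) * Complex.I))⁻¹ = (r:ℂ) := by
    field_simp
  rw [hR]
  have hL : z * (Complex.exp ((φ:ℂ) * Complex.I))⁻¹ = Complex.exp ((↑(θ - φ)) * Complex.I) := by
    rw [hzeq, ← Complex.exp_neg, ← Complex.exp_add]
    push_cast
    ring_nf
  rw [hL]
  set ψ := θ - φ with hψ
  -- RHS norm is real
  have hRnorm : ‖((r:ℂ) - 1) ^ 2 + (a:ℂ) ^ 2‖ = (1 - r) ^ 2 + a ^ 2 := by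
    have : ((r:ℂ) - 1) ^ 2 + (a:ℂ) ^ 2 = (((1 - r) ^ 2 + a ^ 2 : ℝ) : ℂ) := by
      push_cast; ring
    rw [this, Complex.norm_real, Real.norm_eq_abs, abs_of_nonneg (by positivity)]
  rw [hRnorm]
  -- express LHS
  have hE : (Complex.exp ((ψ:ℂ) * Complex.I) - 1) ^ 2 + (a:ℂ) ^ 2
      = (((Real.cos ψ - 1) ^ 2 - Real.sin ψ ^ 2 + a ^ 2 : ℝ) : ℂ)
        + ((2 * (Real.cos ψ - 1) * Real.sin ψ : ℝ) : ℂ) * Complex.I := by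
    rw [Complex.exp_mul_I, ← Complex.ofReal_cos, ← Complex.ofReal_sin]
    push_cast
    ring_nf
    rw [Complex.I_sq]
    ring
  rw [hE]
  have hcos : 0 ≤ Real.cos ψ := by
    apply Real.cos_nonneg_of_mem_Icc
    constructor
    · have := abs_le.mp hφ
      have habs : |θ| ≤ α := abs_le.mpr ⟨hz1, hz2⟩
      have := abs_le.mp habs
      have hpi : 0 < Real.pi := Real.pi_pos
      simp only [hψ]
      nlinarith [this.1, this.2]
    · have := abs_le.mp hφ
      have habs : |θ| ≤ α := abs_le.mpr ⟨hz1, hz2⟩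
      have h2 := abs_le.mp habs
      simp only [hψ]
      nlinarith [h2.1, h2.2]
  have hcos1 : Real.cos ψ ≤ 1 := Real.cos_le_one ψ
  have hsc : Real.sin ψ ^ 2 + Real.cos ψ ^ 2 = 1 := Real.sin_sq_add_cos_sq ψ
  set c := Real.cos ψ
  set s := Real.sin ψ
  apply lt_of_pow_lt_pow_left₀ 2 (by positivity)
  have hnorm2 : ‖(((c - 1) ^ 2 - s ^ 2 + a ^ 2 : ℝ) : ℂ)
      + ((2 * (c - 1) * s : ℝ) : ℂ) * Complex.I‖ ^ 2
      = ((c - 1) ^ 2 - s ^ 2 + a ^ 2) ^ 2 + (2 * (c - 1) * s) ^ 2 := by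
    rw [Complex.sq_norm, Complex.normSq_add_mul_I]
  rw [hnorm2]
  nlinarith [sq_nonneg (1 - r), mul_nonneg (mul_nonneg (sq_nonneg a) (sub_nonneg.2 hcos1)) hcos,
    sq_nonneg (1 - c), sq_nonneg c, pow_pos hr1' 4, sq_nonneg ((1-r)^2), har, sq_nonneg (a*(1-r))]
end
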